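/- arXiv:2309.07342 — 4 statements merged into one kernel-verified Lean document; each statement's English description precedes it below -/
import Mathlib

section
/- There exists a constant C > 0, depending only on q' and F, such that the following holds. For every m ≥ 1, every λ ≥ 0, and every pair (a, c) solving the mode-λ model system on (0,∞) with asymptotic data (c₀, 0, h) at τ = 0, one has for all τ ∈ (0, 1/m]: (i) (1+λ²)·a(τ)² + a'(τ)² ≤ C·((1+λ²)·h² + m⁻²·c₀²); (ii) a(τ)² ≤ C·(h² + τ²·λ²·h² + τ²·m⁻²·c₀²); (iii) c(τ)² ≤ C·(c₀² + τ⁴·(1+λ²)·h²). (This is the single spherical-harmonic-mode version of the paper's low-frequency estimate for the regular component α_J, Proposition 3.1.) -/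
open Set Filter

/-- The pair `(a, c)` solves the mode-`lam` model system on `I ⊆ (0,∞)`:
`a` is twice differentiable and `c` is differentiable on `I`, and for all `τ ∈ I`,
(E) `a'' + τ⁻¹·a' + 4q'·a + 4λ²·(τ²+1)⁻²·a = f₁·τ·a' + f₂·τ²·a + f₃·c` and
(C) `c' = 2τ·a`. -/
def SolvesModelSystem (q' : ℝ) (f₁ f₂ f₃ : ℝ → ℝ) (lam : ℝ)
    (a c : ℝ → ℝ) (I : Set ℝ) : Prop :=
  ∀ τ ∈ I,
    DifferentiableAt ℝ a τ ∧ DifferentiableAt ℝ (deriv a) τ ∧ DifferentiableAt ℝ c τ ∧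
    (deriv (deriv a) τ + τ⁻¹ * deriv a τ + 4 * q' * a τ
        + 4 * lam ^ 2 * ((τ ^ 2 + 1) ^ 2)⁻¹ * a τ
      = f₁ τ * τ * deriv a τ + f₂ τ * τ ^ 2 * a τ + f₃ τ * c τ) ∧
    deriv c τ = 2 * τ * a τ

/-- The pair `(a, c)` (solving the model system on `(0,∞)`, with `c` extended
continuously to `[0,∞)`) has asymptotic data `(c₀, O, h)` at `τ = 0`. -/
def HasAsymptoticData (a c : ℝ → ℝ) (c₀ O h : ℝ) : Prop :=
  ContinuousOn c (Ici 0) ∧ c 0 = c₀ ∧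
  ∃ K : ℝ, 0 ≤ K ∧ ∀ τ ∈ Ioc (0:ℝ) 1,
    |a τ - O * Real.log τ - h| ≤ K * τ ^ 2 * (1 + Real.log τ ^ 2) ∧
    |deriv a τ - O / τ| ≤ K * τ * (1 + Real.log τ ^ 2)

open Real Topology




lemma my_gronwall {f f' : ℝ → ℝ} {δ K ε : ℝ} {a b : ℝ}
    (hf : ContinuousOn f (Icc a b))
    (hf' : ∀ x ∈ Ico a b, HasDerivWithinAt f (f' x) (Ici x) x)
    (ha : f a ≤ δ) (bound : ∀ x ∈ Ico a b, f' x ≤ K * f x + ε) :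
    ∀ x ∈ Icc a b, f x ≤ gronwallBound δ K ε (x - a) :=
  le_gronwallBound_of_liminf_deriv_right_le hf
    (fun x hx _r hr => ((hf' x hx).liminf_right_slope_le hr).mono fun z hz => by
      simpa [slope_def_field, div_eq_inv_mul] using hz) ha bound

lemma my_gronwallBound_le {δ K ε t : ℝ} (hK : 0 < K) (hδ : 0 ≤ δ) (hε : 0 ≤ ε) (ht0 : 0 ≤ t)
    (ht1 : t ≤ 1) :
    gronwallBound δ K ε t ≤ Real.exp K * (δ + ε * t) := by
  rw [gronwallBound_of_K_ne_0 hK.ne']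
  have hx : 0 ≤ K * t := by positivity
  have h3 : (0:ℝ) < Real.exp (K * t) := Real.exp_pos _
  have h1 : Real.exp (K * t) - 1 ≤ K * t * Real.exp (K * t) := by
    have h2 := Real.add_one_le_exp (-(K * t))
    rw [Real.exp_neg] at h2
    have h4 : (1 - K * t) * Real.exp (K * t) ≤ 1 := by
      have h5 := mul_le_mul_of_nonneg_right h2 h3.le
      rw [inv_mul_cancel₀ h3.ne'] at h5
      nlinarith
    nlinarith
  have h5 : ε / K * (Real.exp (K * t) - 1) ≤ ε / K * (K * t * Real.exp (K * t)) :=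
    mul_le_mul_of_nonneg_left h1 (by positivity)
  have h6 : ε / K * (K * t * Real.exp (K * t)) = ε * t * Real.exp (K * t) := by
    field_simp
  have h7 : Real.exp (K * t) ≤ Real.exp K := Real.exp_le_exp.2 (by nlinarith)
  have h8 : δ * Real.exp (K * t) ≤ δ * Real.exp K := mul_le_mul_of_nonneg_left h7 hδ
  have h9 : ε * t * Real.exp (K * t) ≤ ε * t * Real.exp K :=
    mul_le_mul_of_nonneg_left h7 (by positivity)
  nlinarith

lemma helper_prod (F u x y : ℝ) (hF : 0 ≤ F) (hu : |u| ≤ F) :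
    2 * x * (u * y) ≤ F * (x ^ 2 + y ^ 2) := by
  obtain ⟨h1, h2⟩ := abs_le.1 hu
  nlinarith [mul_nonneg (sub_nonneg.2 h2) (sq_nonneg (x + y)),
    mul_nonneg (by linarith : (0:ℝ) ≤ F + u) (sq_nonneg (x - y))]

lemma helper_abs_mul (F u s : ℝ) (hu : |u| ≤ F) (hs0 : 0 ≤ s) (hs1 : s ≤ 1) :
    |u * s| ≤ F := by
  rw [abs_mul, abs_of_nonneg hs0]
  calc |u| * s ≤ F * 1 := by
        apply mul_le_mul hu hs1 hs0 (le_trans (abs_nonneg u) hu)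
    _ = F := mul_one F

set_option maxHeartbeats 1000000 in
lemma aux_key (q' F lam c₀ s A A' A'' Cc W u₁ u₂ u₃ : ℝ)
    (hq : 1 ≤ q') (hF : 0 ≤ F) (hs0 : 0 < s) (hs1 : s ≤ 1) (hW0 : 0 ≤ W)
    (hu₁ : |u₁| ≤ F) (hu₂ : |u₂| ≤ F) (hu₃ : |u₃| ≤ F)
    (heq : A'' + s⁻¹ * A' + 4 * q' * A + 4 * lam ^ 2 * W * A
      = u₁ * s * A' + u₂ * s ^ 2 * A + u₃ * Cc) :
    4 * q' * (2 * A * A')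
      + (4 * lam ^ 2 * (-(2 * (s ^ 2 + 1) * (2 * s)) / ((s ^ 2 + 1) ^ 2) ^ 2) * A ^ 2
        + 4 * lam ^ 2 * W * (2 * A * A'))
      + 2 * A' * A'' + 2 * (Cc - c₀) * (2 * s * A)
    ≤ (6 * F + 4) * (4 * q' * A ^ 2 + 4 * lam ^ 2 * W * A ^ 2 + A' ^ 2 + (Cc - c₀) ^ 2)
      + 2 * F * |c₀| *
        Real.sqrt (4 * q' * A ^ 2 + 4 * lam ^ 2 * W * A ^ 2 + A' ^ 2 + (Cc - c₀) ^ 2) := by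
  have h1 : 0 ≤ (4 * q' - 1) * A ^ 2 := mul_nonneg (by linarith) (sq_nonneg A)
  have h2 : 0 ≤ 4 * lam ^ 2 * W * A ^ 2 :=
    mul_nonneg (mul_nonneg (by positivity) hW0) (sq_nonneg A)
  have hEs0 : 0 ≤ 4 * q' * A ^ 2 + 4 * lam ^ 2 * W * A ^ 2 + A' ^ 2 + (Cc - c₀) ^ 2 := by
    nlinarith [sq_nonneg A', sq_nonneg (Cc - c₀), sq_nonneg A]
  set S := Real.sqrt (4 * q' * A ^ 2 + 4 * lam ^ 2 * W * A ^ 2 + A' ^ 2 + (Cc - c₀) ^ 2) with hSdef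
  have hS0 : 0 ≤ S := Real.sqrt_nonneg _
  have hmA : A ^ 2 ≤ 4 * q' * A ^ 2 + 4 * lam ^ 2 * W * A ^ 2 + A' ^ 2 + (Cc - c₀) ^ 2 := by
    nlinarith [sq_nonneg A', sq_nonneg (Cc - c₀)]
  have hmA' : A' ^ 2 ≤ 4 * q' * A ^ 2 + 4 * lam ^ 2 * W * A ^ 2 + A' ^ 2 + (Cc - c₀) ^ 2 := by
    nlinarith [sq_nonneg (Cc - c₀), sq_nonneg A]
  have hmD : (Cc - c₀) ^ 2 ≤ 4 * q' * A ^ 2 + 4 * lam ^ 2 * W * A ^ 2 + A' ^ 2 + (Cc - c₀) ^ 2 := by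
    nlinarith [sq_nonneg A', sq_nonneg A]
  have hA'S : |A'| ≤ S := by
    have := Real.sqrt_le_sqrt hmA'
    rwa [Real.sqrt_sq_eq_abs] at this
  have hLHS : 4 * q' * (2 * A * A')
      + (4 * lam ^ 2 * (-(2 * (s ^ 2 + 1) * (2 * s)) / ((s ^ 2 + 1) ^ 2) ^ 2) * A ^ 2
        + 4 * lam ^ 2 * W * (2 * A * A'))
      + 2 * A' * A'' + 2 * (Cc - c₀) * (2 * s * A)
    = 4 * lam ^ 2 * (-(2 * (s ^ 2 + 1) * (2 * s)) / ((s ^ 2 + 1) ^ 2) ^ 2) * A ^ 2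
      - 2 * s⁻¹ * A' ^ 2 + 2 * A' * (u₁ * s * A') + 2 * A' * (u₂ * s ^ 2 * A)
      + 2 * A' * (u₃ * (Cc - c₀)) + 2 * A' * (u₃ * c₀) + 2 * (Cc - c₀) * (2 * s * A) := by
    linear_combination (2 * A') * heq
  rw [hLHS]
  have tb0 : 4 * lam ^ 2 * (-(2 * (s ^ 2 + 1) * (2 * s)) / ((s ^ 2 + 1) ^ 2) ^ 2) * A ^ 2 ≤ 0 := by
    rw [neg_div, mul_neg, neg_mul]
    apply neg_nonpos_of_nonneg
    apply mul_nonneg (mul_nonneg (by positivity) _) (sq_nonneg A)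
    apply div_nonneg (by nlinarith) (by positivity)
  have tb6 : 0 ≤ 2 * s⁻¹ * A' ^ 2 :=
    mul_nonneg (mul_nonneg (by norm_num) (inv_nonneg.2 hs0.le)) (sq_nonneg A')
  have tb1 := helper_prod F (u₁ * s) A' A' hF (helper_abs_mul F u₁ s hu₁ hs0.le hs1)
  have tb2 := helper_prod F (u₂ * s ^ 2) A' A hF
    (helper_abs_mul F u₂ (s ^ 2) hu₂ (sq_nonneg s) (by nlinarith))
  have tb3 := helper_prod F u₃ A' (Cc - c₀) hF hu₃
  have tb5 := helper_prod 2 (2 * s) (Cc - c₀) A (by norm_num)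
    (by rw [abs_of_nonneg (by linarith : (0:ℝ) ≤ 2 * s)]; linarith)
  have tb4 : 2 * A' * (u₃ * c₀) ≤ 2 * F * |c₀| * S := by
    have h1' : A' * (u₃ * c₀) ≤ |A'| * (F * |c₀|) := by
      calc A' * (u₃ * c₀) ≤ |A' * (u₃ * c₀)| := le_abs_self _
        _ = |A'| * (|u₃| * |c₀|) := by rw [abs_mul, abs_mul]
        _ ≤ |A'| * (F * |c₀|) := by
            apply mul_le_mul_of_nonneg_left _ (abs_nonneg _)
            exact mul_le_mul_of_nonneg_right hu₃ (abs_nonneg _)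
    have h2' : |A'| * (F * |c₀|) ≤ S * (F * |c₀|) :=
      mul_le_mul_of_nonneg_right hA'S (by positivity)
    nlinarith
  have m1 : F * A' ^ 2 ≤ F * (4 * q' * A ^ 2 + 4 * lam ^ 2 * W * A ^ 2 + A' ^ 2 + (Cc - c₀) ^ 2) :=
    mul_le_mul_of_nonneg_left hmA' hF
  have m2 : F * A ^ 2 ≤ F * (4 * q' * A ^ 2 + 4 * lam ^ 2 * W * A ^ 2 + A' ^ 2 + (Cc - c₀) ^ 2) :=
    mul_le_mul_of_nonneg_left hmA hF
  have m3 : F * (Cc - c₀) ^ 2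
      ≤ F * (4 * q' * A ^ 2 + 4 * lam ^ 2 * W * A ^ 2 + A' ^ 2 + (Cc - c₀) ^ 2) :=
    mul_le_mul_of_nonneg_left hmD hF
  linarith [tb0, tb1, tb2, tb3, tb4, tb5, tb6, m1, m2, m3, hmA, hmA', hmD]


lemma aux_hasDerivAt_E (q' lam c₀ : ℝ) (a c : ℝ → ℝ) (s : ℝ)
    (da : DifferentiableAt ℝ a s) (dda : DifferentiableAt ℝ (deriv a) s)
    (dc : DifferentiableAt ℝ c s) (hceq : deriv c s = 2 * s * a s) :
    HasDerivAt (fun x => 4 * q' * a x ^ 2 + 4 * lam ^ 2 * ((x ^ 2 + 1) ^ 2)⁻¹ * a x ^ 2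
        + deriv a x ^ 2 + (c x - c₀) ^ 2)
      (4 * q' * (2 * a s * deriv a s)
        + (4 * lam ^ 2 * (-(2 * (s ^ 2 + 1) * (2 * s)) / ((s ^ 2 + 1) ^ 2) ^ 2) * a s ^ 2
          + 4 * lam ^ 2 * ((s ^ 2 + 1) ^ 2)⁻¹ * (2 * a s * deriv a s))
        + 2 * deriv a s * deriv (deriv a) s + 2 * (c s - c₀) * (2 * s * a s)) s := by
  have hx2 : HasDerivAt (fun x : ℝ => x ^ 2 + 1) (2 * s) s := by
    simpa using (hasDerivAt_pow 2 s).add_const 1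
  have hp : HasDerivAt (fun x : ℝ => (x ^ 2 + 1) ^ 2) (2 * (s ^ 2 + 1) * (2 * s)) s := by
    simpa using hx2.fun_pow 2
  have hne : ((s ^ 2 + 1) ^ 2 : ℝ) ≠ 0 := by positivity
  have hinv : HasDerivAt (fun x : ℝ => ((x ^ 2 + 1) ^ 2)⁻¹)
      (-(2 * (s ^ 2 + 1) * (2 * s)) / ((s ^ 2 + 1) ^ 2) ^ 2) s := hp.inv hne
  have hW : HasDerivAt (fun x : ℝ => 4 * lam ^ 2 * ((x ^ 2 + 1) ^ 2)⁻¹)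
      (4 * lam ^ 2 * (-(2 * (s ^ 2 + 1) * (2 * s)) / ((s ^ 2 + 1) ^ 2) ^ 2)) s :=
    hinv.const_mul _
  have hA : HasDerivAt a (deriv a s) s := da.hasDerivAt
  have hA2 : HasDerivAt (fun x => a x ^ 2) (2 * a s * deriv a s) s := by
    simpa [mul_assoc] using hA.fun_pow 2
  have hA'2 : HasDerivAt (fun x => deriv a x ^ 2) (2 * deriv a s * deriv (deriv a) s) s := by
    simpa [mul_assoc] using dda.hasDerivAt.fun_pow 2
  have hC : HasDerivAt c (2 * s * a s) s := hceq ▸ dc.hasDerivAt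
  have hD2 : HasDerivAt (fun x => (c x - c₀) ^ 2) (2 * (c s - c₀) * (2 * s * a s)) s := by
    simpa [mul_assoc] using (hC.sub_const c₀).fun_pow 2
  exact (((hA2.const_mul (4 * q')).add (hW.mul hA2)).add hA'2).add hD2


lemma tendsto_mul_one_add_log_sq :
    Tendsto (fun x : ℝ => x * (1 + Real.log x ^ 2)) (𝓝[>] 0) (𝓝 0) := by
  have hid : Tendsto (fun x : ℝ => x) (𝓝[>] (0:ℝ)) (𝓝 0) :=
    tendsto_id.mono_left nhdsWithin_le_nhds
  have h := tendsto_log_mul_rpow_nhdsGT_zero (r := 1/2) (by norm_num)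
  have h2 : Tendsto (fun x : ℝ => x * Real.log x ^ 2) (𝓝[>] 0) (𝓝 0) := by
    have h3 := h.mul h
    rw [mul_zero] at h3
    apply h3.congr'
    filter_upwards [self_mem_nhdsWithin] with x hx
    have hx0 : (0:ℝ) < x := hx
    have hxx : x ^ (1/2:ℝ) * x ^ (1/2:ℝ) = x := by
      rw [← Real.rpow_add hx0]; norm_num
    linear_combination Real.log x ^ 2 * hxx
  have h4 := hid.add h2
  rw [add_zero] at h4
  exact h4.congr (fun x => by ring)

lemma aux_tendsto_a {h Kd : ℝ} {a : ℝ → ℝ}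
    (hKd : ∀ τ ∈ Ioc (0:ℝ) 1, |a τ - 0 * Real.log τ - h| ≤ Kd * τ ^ 2 * (1 + Real.log τ ^ 2)) :
    Tendsto a (𝓝[>] 0) (𝓝 h) := by
  have hb : Tendsto (fun σ : ℝ => Kd * (σ * (σ * (1 + Real.log σ ^ 2)))) (𝓝[>] (0:ℝ)) (𝓝 0) := by
    have h1 := (tendsto_id.mono_left nhdsWithin_le_nhds :
      Tendsto (fun x : ℝ => x) (𝓝[>] (0:ℝ)) (𝓝 0)).mul tendsto_mul_one_add_log_sq
    rw [mul_zero] at h1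
    simpa using h1.const_mul Kd
  have key : Tendsto (fun σ => a σ - h) (𝓝[>] (0:ℝ)) (𝓝 0) := by
    apply squeeze_zero_norm' _ hb
    filter_upwards [Ioo_mem_nhdsGT_of_mem (⟨le_refl (0:ℝ), zero_lt_one⟩ : (0:ℝ) ∈ Ico (0:ℝ) 1)]
      with σ hσ
    have h2 := hKd σ ⟨hσ.1, hσ.2.le⟩
    rw [Real.norm_eq_abs]
    simp only [zero_mul, sub_zero] at h2
    calc |a σ - h| ≤ Kd * σ ^ 2 * (1 + Real.log σ ^ 2) := h2
      _ = Kd * (σ * (σ * (1 + Real.log σ ^ 2))) := by ring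
  have h5 := key.add (tendsto_const_nhds (α := ℝ) (x := h))
  rw [zero_add] at h5
  exact h5.congr (fun x => by ring)

lemma aux_tendsto_deriv_a {Kd : ℝ} {a : ℝ → ℝ}
    (hKd : ∀ τ ∈ Ioc (0:ℝ) 1, |deriv a τ - 0 / τ| ≤ Kd * τ * (1 + Real.log τ ^ 2)) :
    Tendsto (deriv a) (𝓝[>] 0) (𝓝 0) := by
  have hb : Tendsto (fun σ : ℝ => Kd * (σ * (1 + Real.log σ ^ 2))) (𝓝[>] (0:ℝ)) (𝓝 0) := by
    simpa using tendsto_mul_one_add_log_sq.const_mul Kd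
  apply squeeze_zero_norm' _ hb
  filter_upwards [Ioo_mem_nhdsGT_of_mem (⟨le_refl (0:ℝ), zero_lt_one⟩ : (0:ℝ) ∈ Ico (0:ℝ) 1)]
    with σ hσ
  have h2 := hKd σ ⟨hσ.1, hσ.2.le⟩
  rw [Real.norm_eq_abs]
  simp only [zero_div, sub_zero] at h2
  calc |deriv a σ| ≤ Kd * σ * (1 + Real.log σ ^ 2) := h2
    _ = Kd * (σ * (1 + Real.log σ ^ 2)) := by ring

lemma aux_tendsto_E (q' lam c₀ h Kd : ℝ) (a c : ℝ → ℝ)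
    (hccont : ContinuousOn c (Ici 0)) (hc0 : c 0 = c₀)
    (hKd : ∀ τ ∈ Ioc (0:ℝ) 1,
      |a τ - 0 * Real.log τ - h| ≤ Kd * τ ^ 2 * (1 + Real.log τ ^ 2) ∧
      |deriv a τ - 0 / τ| ≤ Kd * τ * (1 + Real.log τ ^ 2)) :
    Tendsto (fun σ => 4 * q' * a σ ^ 2 + 4 * lam ^ 2 * ((σ ^ 2 + 1) ^ 2)⁻¹ * a σ ^ 2
        + deriv a σ ^ 2 + (c σ - c₀) ^ 2)
      (𝓝[>] 0) (𝓝 (4 * q' * h ^ 2 + 4 * lam ^ 2 * h ^ 2)) := by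
  have hah : Tendsto a (𝓝[>] 0) (𝓝 h) := aux_tendsto_a (fun τ hτ => (hKd τ hτ).1)
  have had : Tendsto (deriv a) (𝓝[>] 0) (𝓝 0) := aux_tendsto_deriv_a (fun τ hτ => (hKd τ hτ).2)
  have hch : Tendsto c (𝓝[>] 0) (𝓝 c₀) := by
    have h1 := (hccont 0 self_mem_Ici).tendsto
    rw [hc0] at h1
    exact h1.mono_left (nhdsWithin_mono _ Ioi_subset_Ici_self)
  have hWt : Tendsto (fun σ : ℝ => 4 * lam ^ 2 * ((σ ^ 2 + 1) ^ 2)⁻¹) (𝓝[>] (0:ℝ))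
      (𝓝 (4 * lam ^ 2)) := by
    have hcont : ContinuousAt (fun σ : ℝ => 4 * lam ^ 2 * ((σ ^ 2 + 1) ^ 2)⁻¹) 0 := by
      apply ContinuousAt.mul continuousAt_const
      apply ContinuousAt.inv₀ (by fun_prop) (by norm_num)
    have h9 : Tendsto (fun σ : ℝ => 4 * lam ^ 2 * ((σ ^ 2 + 1) ^ 2)⁻¹) (𝓝[>] (0:ℝ))
        (𝓝 (4 * lam ^ 2 * (((0:ℝ) ^ 2 + 1) ^ 2)⁻¹)) :=
      hcont.tendsto.mono_left nhdsWithin_le_nhds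
    simpa using h9
  have t1 : Tendsto (fun σ => 4 * q' * a σ ^ 2) (𝓝[>] (0:ℝ)) (𝓝 (4 * q' * h ^ 2)) :=
    (hah.pow 2).const_mul _
  have t2 : Tendsto (fun σ => 4 * lam ^ 2 * ((σ ^ 2 + 1) ^ 2)⁻¹ * a σ ^ 2) (𝓝[>] (0:ℝ))
      (𝓝 (4 * lam ^ 2 * h ^ 2)) := hWt.mul (hah.pow 2)
  have t3 : Tendsto (fun σ => deriv a σ ^ 2) (𝓝[>] (0:ℝ)) (𝓝 0) := by
    simpa using had.pow 2
  have t4 : Tendsto (fun σ => (c σ - c₀) ^ 2) (𝓝[>] (0:ℝ)) (𝓝 0) := by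
    have := (hch.sub_const c₀).pow 2
    simpa using this
  have := ((t1.add t2).add t3).add t4
  simpa using this

lemma helper_sq2 (x y : ℝ) : (x + y) ^ 2 ≤ 2 * x ^ 2 + 2 * y ^ 2 := by
  nlinarith [sq_nonneg (x - y)]

lemma helper_sqabs (x y : ℝ) : (|x| + y) ^ 2 ≤ 2 * x ^ 2 + 2 * y ^ 2 := by
  nlinarith [sq_nonneg (|x| - y), sq_abs x]

-- main theorem body; to be concatenated after aux lemmas
set_option maxHeartbeats 2000000 in
/-- Low-frequency estimate for the regular component (single-mode version of
Proposition 3.1 of the paper). -/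
theorem lowFrequency_regular_estimate (q' F : ℝ) (hq : 1 ≤ q') (hF : 0 ≤ F) :
    ∃ C > 0, ∀ f₁ f₂ f₃ : ℝ → ℝ,
      ContinuousOn f₁ (Ici 0) → ContinuousOn f₂ (Ici 0) → ContinuousOn f₃ (Ici 0) →
      (∀ τ ≥ (0:ℝ), |f₁ τ| ≤ F) → (∀ τ ≥ (0:ℝ), |f₂ τ| ≤ F) → (∀ τ ≥ (0:ℝ), |f₃ τ| ≤ F) →
      ∀ m lam : ℝ, 1 ≤ m → 0 ≤ lam →
      ∀ a c : ℝ → ℝ, ∀ c₀ h : ℝ,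
      SolvesModelSystem q' f₁ f₂ f₃ lam a c (Ioi 0) →
      HasAsymptoticData a c c₀ 0 h →
      ∀ τ ∈ Ioc (0:ℝ) (1 / m),
        ((1 + lam ^ 2) * a τ ^ 2 + deriv a τ ^ 2
            ≤ C * ((1 + lam ^ 2) * h ^ 2 + c₀ ^ 2 / m ^ 2)) ∧
        (a τ ^ 2 ≤ C * (h ^ 2 + τ ^ 2 * lam ^ 2 * h ^ 2 + τ ^ 2 * c₀ ^ 2 / m ^ 2)) ∧
        (c τ ^ 2 ≤ C * (c₀ ^ 2 + τ ^ 4 * (1 + lam ^ 2) * h ^ 2)) := by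
  have hq0 : (0:ℝ) < q' := lt_of_lt_of_le one_pos hq
  have hC₁pos : (0:ℝ) < Real.exp (6 * F + 4) * (8 * q' + 2 * F ^ 2 + 1) :=
    mul_pos (Real.exp_pos _) (by nlinarith [sq_nonneg F])
  refine ⟨20 * (Real.exp (6 * F + 4) * (8 * q' + 2 * F ^ 2 + 1) + 1), by linarith, ?_⟩
  intro f₁ f₂ f₃ hf₁c hf₂c hf₃c hb₁ hb₂ hb₃ m lam hm hlam a c c₀ h hsol hdata
  obtain ⟨hccont, hc0, Kd, hKd0, hKdb⟩ := hdata
  have hm0 : (0:ℝ) < m := lt_of_lt_of_le one_pos hm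
  have hT1 : 1 / m ≤ 1 := by rw [div_le_one hm0]; exact hm
  set C₁ := Real.exp (6 * F + 4) * (8 * q' + 2 * F ^ 2 + 1) with hC₁def
  set R := (1 + lam ^ 2) * h ^ 2 + c₀ ^ 2 / m ^ 2 with hRdef
  have hR0 : 0 ≤ R := by rw [hRdef]; positivity
  set E : ℝ → ℝ := fun s => 4 * q' * a s ^ 2 + 4 * lam ^ 2 * ((s ^ 2 + 1) ^ 2)⁻¹ * a s ^ 2
      + deriv a s ^ 2 + (c s - c₀) ^ 2 with hEdef
  set ED : ℝ → ℝ := fun s => 4 * q' * (2 * a s * deriv a s)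
      + (4 * lam ^ 2 * (-(2 * (s ^ 2 + 1) * (2 * s)) / ((s ^ 2 + 1) ^ 2) ^ 2) * a s ^ 2
        + 4 * lam ^ 2 * ((s ^ 2 + 1) ^ 2)⁻¹ * (2 * a s * deriv a s))
      + 2 * deriv a s * deriv (deriv a) s + 2 * (c s - c₀) * (2 * s * a s) with hEDdef
  have hEnn : ∀ s, 0 ≤ E s := by
    intro s
    rw [hEdef]
    have h1 : 0 ≤ 4 * q' * a s ^ 2 := by positivity
    have h2 : 0 ≤ 4 * lam ^ 2 * ((s ^ 2 + 1) ^ 2)⁻¹ * a s ^ 2 := by positivity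
    have h3 := sq_nonneg (deriv a s)
    have h4 := sq_nonneg (c s - c₀)
    simp only []
    linarith
  have hED : ∀ x : ℝ, 0 < x → HasDerivAt E (ED x) x := by
    intro x hx
    obtain ⟨da, dda, dc, _, hceq⟩ := hsol x (mem_Ioi.mpr hx)
    rw [hEdef, hEDdef]
    exact aux_hasDerivAt_E q' lam c₀ a c x da dda dc hceq
  have hEDle : ∀ x : ℝ, 0 < x → x ≤ 1 →
      ED x ≤ (6 * F + 4) * E x + 2 * F * |c₀| * Real.sqrt (E x) := by
    intro x hx hx1
    obtain ⟨da, dda, dc, heq, hceq⟩ := hsol x (mem_Ioi.mpr hx)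
    rw [hEdef, hEDdef]
    simp only []
    exact aux_key q' F lam c₀ x (a x) (deriv a x) (deriv (deriv a) x) (c x)
      (((x ^ 2 + 1) ^ 2)⁻¹) (f₁ x) (f₂ x) (f₃ x) hq hF hx hx1 (by positivity)
      (hb₁ x hx.le) (hb₂ x hx.le) (hb₃ x hx.le) heq
  have hE₀nn : (0:ℝ) ≤ 4 * q' * h ^ 2 + 4 * lam ^ 2 * h ^ 2 := by positivity
  have hEtend : Tendsto E (𝓝[>] 0) (𝓝 (4 * q' * h ^ 2 + 4 * lam ^ 2 * h ^ 2)) := by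
    rw [hEdef]
    exact aux_tendsto_E q' lam c₀ h Kd a c hccont hc0 hKdb
  have hch : Tendsto c (𝓝[>] (0:ℝ)) (𝓝 c₀) := by
    have h1 := (hccont 0 self_mem_Ici).tendsto
    rw [hc0] at h1
    exact h1.mono_left (nhdsWithin_mono _ Ioi_subset_Ici_self)
  have hah : Tendsto a (𝓝[>] (0:ℝ)) (𝓝 h) := aux_tendsto_a (fun τ hτ => (hKdb τ hτ).1)
  -- ### main energy bound
  have hEbound : ∀ t : ℝ, 0 < t → t ≤ 1 / m → E t ≤ C₁ * R := by
    intro t ht0 htm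
    have ht1 : t ≤ 1 := htm.trans hT1
    have hKhalf : (0:ℝ) < (6 * F + 4) / 2 := by linarith
    have step1 : ∀ ε' : ℝ, 0 < ε' → Real.sqrt (E t + ε')
        ≤ Real.exp ((6 * F + 4) / 2)
          * (Real.sqrt ((4 * q' * h ^ 2 + 4 * lam ^ 2 * h ^ 2) + ε') + F * |c₀| * t) := by
      intro ε' hε'
      have step1a : ∀ σ : ℝ, σ ∈ Ioo (0:ℝ) t → Real.sqrt (E t + ε')
          ≤ Real.exp ((6 * F + 4) / 2) * (Real.sqrt (E σ + ε') + F * |c₀| * t) := by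
        intro σ hσ
        have hud : ∀ x ∈ Ico σ t, HasDerivWithinAt (fun s => Real.sqrt (E s + ε'))
            (1 / (2 * Real.sqrt (E x + ε')) * ED x) (Ici x) x := by
          intro x hx
          have hx0 : 0 < x := lt_of_lt_of_le hσ.1 hx.1
          have hne : E x + ε' ≠ 0 := ne_of_gt (by linarith [hEnn x])
          exact ((Real.hasDerivAt_sqrt hne).comp x ((hED x hx0).add_const ε')).hasDerivWithinAt
        have hucont : ContinuousOn (fun s => Real.sqrt (E s + ε')) (Icc σ t) := by
          intro x hx
          have hx0 : 0 < x := lt_of_lt_of_le hσ.1 hx.1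
          exact (Real.continuous_sqrt.continuousAt.comp
            ((hED x hx0).differentiableAt.continuousAt.add continuousAt_const)).continuousWithinAt
        have hbound : ∀ x ∈ Ico σ t, 1 / (2 * Real.sqrt (E x + ε')) * ED x
            ≤ (6 * F + 4) / 2 * Real.sqrt (E x + ε') + F * |c₀| := by
          intro x hx
          have hx0 : 0 < x := lt_of_lt_of_le hσ.1 hx.1
          have hx1 : x ≤ 1 := le_trans hx.2.le ht1
          have hkey := hEDle x hx0 hx1
          have hEx := hEnn x
          have hP : 0 < Real.sqrt (E x + ε') := Real.sqrt_pos.2 (by linarith)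
          have hP2 : Real.sqrt (E x + ε') ^ 2 = E x + ε' := Real.sq_sqrt (by linarith)
          have hle : Real.sqrt (E x) ≤ Real.sqrt (E x + ε') := Real.sqrt_le_sqrt (by linarith)
          rw [show 1 / (2 * Real.sqrt (E x + ε')) * ED x = ED x / (2 * Real.sqrt (E x + ε'))
              from by ring,
            div_le_iff₀ (by linarith : (0:ℝ) < 2 * Real.sqrt (E x + ε'))]
          have hFc : (0:ℝ) ≤ 2 * F * |c₀| := by positivity
          have hexp : ((6 * F + 4) / 2 * Real.sqrt (E x + ε') + F * |c₀|)
              * (2 * Real.sqrt (E x + ε'))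
              = (6 * F + 4) * Real.sqrt (E x + ε') ^ 2
                + 2 * F * |c₀| * Real.sqrt (E x + ε') := by ring
          rw [hexp, hP2]
          have hh1 : 2 * F * |c₀| * Real.sqrt (E x) ≤ 2 * F * |c₀| * Real.sqrt (E x + ε') :=
            mul_le_mul_of_nonneg_left hle hFc
          have hh2 : (0:ℝ) ≤ (6 * F + 4) * ε' :=
            mul_nonneg (by linarith) hε'.le
          linarith [hkey, hh1, hh2]
        have hg := my_gronwall hucont hud (le_refl (Real.sqrt (E σ + ε'))) hbound t
          (right_mem_Icc.2 hσ.2.le)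
        have hgb := my_gronwallBound_le hKhalf (Real.sqrt_nonneg (E σ + ε')) (by positivity : (0:ℝ) ≤ F * |c₀|)
          (by linarith [hσ.1, hσ.2] : (0:ℝ) ≤ t - σ) (by linarith [hσ.1] : t - σ ≤ 1)
        have hmono : Real.sqrt (E σ + ε') + F * |c₀| * (t - σ)
            ≤ Real.sqrt (E σ + ε') + F * |c₀| * t := by
          have h9 : F * |c₀| * (t - σ) ≤ F * |c₀| * t :=
            mul_le_mul_of_nonneg_left (by linarith [hσ.1]) (by positivity)
          linarith
        calc Real.sqrt (E t + ε') ≤ _ := hg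
          _ ≤ Real.exp ((6 * F + 4) / 2)
              * (Real.sqrt (E σ + ε') + F * |c₀| * (t - σ)) := hgb
          _ ≤ Real.exp ((6 * F + 4) / 2) * (Real.sqrt (E σ + ε') + F * |c₀| * t) :=
            mul_le_mul_of_nonneg_left hmono (Real.exp_pos _).le
      have hRHS : Tendsto (fun σ => Real.exp ((6 * F + 4) / 2)
          * (Real.sqrt (E σ + ε') + F * |c₀| * t)) (𝓝[>] (0:ℝ))
          (𝓝 (Real.exp ((6 * F + 4) / 2)
            * (Real.sqrt ((4 * q' * h ^ 2 + 4 * lam ^ 2 * h ^ 2) + ε') + F * |c₀| * t))) := by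
        apply Tendsto.const_mul
        apply Tendsto.add _ tendsto_const_nhds
        exact Real.continuous_sqrt.continuousAt.tendsto.comp (hEtend.add tendsto_const_nhds)
      exact ge_of_tendsto hRHS
        (by filter_upwards [Ioo_mem_nhdsGT_of_mem ⟨le_refl (0:ℝ), ht0⟩] with σ hσ
            using step1a σ hσ)
    have hidz : Tendsto (fun ε' : ℝ => ε') (𝓝[>] (0:ℝ)) (𝓝 0) :=
      tendsto_id.mono_left nhdsWithin_le_nhds
    have hL : Real.sqrt (E t) ≤ Real.exp ((6 * F + 4) / 2)
        * (Real.sqrt (4 * q' * h ^ 2 + 4 * lam ^ 2 * h ^ 2) + F * |c₀| * t) := by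
      have l1 : Tendsto (fun ε' : ℝ => Real.sqrt (E t + ε')) (𝓝[>] (0:ℝ))
          (𝓝 (Real.sqrt (E t))) := by
        have h1 : Tendsto (fun ε' : ℝ => E t + ε') (𝓝[>] (0:ℝ)) (𝓝 (E t + 0)) :=
          tendsto_const_nhds.add hidz
        rw [add_zero] at h1
        exact Real.continuous_sqrt.continuousAt.tendsto.comp h1
      have l2 : Tendsto (fun ε' : ℝ => Real.exp ((6 * F + 4) / 2)
          * (Real.sqrt ((4 * q' * h ^ 2 + 4 * lam ^ 2 * h ^ 2) + ε') + F * |c₀| * t))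
          (𝓝[>] (0:ℝ))
          (𝓝 (Real.exp ((6 * F + 4) / 2)
            * (Real.sqrt (4 * q' * h ^ 2 + 4 * lam ^ 2 * h ^ 2) + F * |c₀| * t))) := by
        apply Tendsto.const_mul
        apply Tendsto.add _ tendsto_const_nhds
        have h1 : Tendsto (fun ε' : ℝ => (4 * q' * h ^ 2 + 4 * lam ^ 2 * h ^ 2) + ε')
            (𝓝[>] (0:ℝ)) (𝓝 ((4 * q' * h ^ 2 + 4 * lam ^ 2 * h ^ 2) + 0)) :=
          tendsto_const_nhds.add hidz
        rw [add_zero] at h1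
        exact Real.continuous_sqrt.continuousAt.tendsto.comp h1
      exact le_of_tendsto_of_tendsto l1 l2
        (by filter_upwards [self_mem_nhdsWithin] with ε' hε' using step1 ε' hε')
    have hsq := pow_le_pow_left₀ (Real.sqrt_nonneg (E t)) hL 2
    rw [Real.sq_sqrt (hEnn t)] at hsq
    have hexp2 : (Real.exp ((6 * F + 4) / 2)) ^ 2 = Real.exp (6 * F + 4) := by
      rw [sq, ← Real.exp_add]; congr 1; ring
    have hsqE₀ := Real.sq_sqrt hE₀nn
    have ht2 : t ^ 2 ≤ 1 / m ^ 2 := by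
      have h1 := pow_le_pow_left₀ ht0.le htm 2
      calc t ^ 2 ≤ (1 / m) ^ 2 := h1
        _ = 1 / m ^ 2 := by rw [div_pow, one_pow]
    have hstep : 2 * (4 * q' * h ^ 2 + 4 * lam ^ 2 * h ^ 2) + 2 * F ^ 2 * c₀ ^ 2 * t ^ 2
        ≤ (8 * q' + 2 * F ^ 2 + 1) * R := by
      rw [hRdef]
      set u : ℝ := c₀ ^ 2 / m ^ 2 with hu
      have hu0 : 0 ≤ u := by rw [hu]; positivity
      have e1 : 8 * lam ^ 2 * h ^ 2 ≤ 8 * q' * (lam ^ 2 * h ^ 2) := by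
        nlinarith [mul_nonneg (sub_nonneg.2 hq) (mul_nonneg (sq_nonneg lam) (sq_nonneg h))]
      have e2 : 2 * F ^ 2 * c₀ ^ 2 * t ^ 2 ≤ 2 * F ^ 2 * u := by
        calc 2 * F ^ 2 * c₀ ^ 2 * t ^ 2 ≤ 2 * F ^ 2 * c₀ ^ 2 * (1 / m ^ 2) :=
              mul_le_mul_of_nonneg_left ht2 (by positivity)
          _ = 2 * F ^ 2 * u := by rw [hu]; ring
      have e3 : (0:ℝ) ≤ (2 * F ^ 2 + 1) * ((1 + lam ^ 2) * h ^ 2) := by positivity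
      have e4 : (0:ℝ) ≤ (8 * q' + 1) * u := mul_nonneg (by linarith) hu0
      nlinarith [e1, e2, e3, e4]
    have hAM : (Real.sqrt (4 * q' * h ^ 2 + 4 * lam ^ 2 * h ^ 2) + F * |c₀| * t) ^ 2
        ≤ 2 * (4 * q' * h ^ 2 + 4 * lam ^ 2 * h ^ 2) + 2 * F ^ 2 * c₀ ^ 2 * t ^ 2 := by
      have habs : F ^ 2 * |c₀| ^ 2 * t ^ 2 = F ^ 2 * c₀ ^ 2 * t ^ 2 := by rw [sq_abs]
      have h9 := helper_sq2 (Real.sqrt (4 * q' * h ^ 2 + 4 * lam ^ 2 * h ^ 2)) (F * |c₀| * t)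
      have h10 : (F * |c₀| * t) ^ 2 = F ^ 2 * |c₀| ^ 2 * t ^ 2 := by ring
      linarith [h9, hsqE₀, habs, h10]
    calc E t ≤ (Real.exp ((6 * F + 4) / 2)
          * (Real.sqrt (4 * q' * h ^ 2 + 4 * lam ^ 2 * h ^ 2) + F * |c₀| * t)) ^ 2 := hsq
      _ = Real.exp (6 * F + 4)
          * (Real.sqrt (4 * q' * h ^ 2 + 4 * lam ^ 2 * h ^ 2) + F * |c₀| * t) ^ 2 := by
          rw [mul_pow, hexp2]
      _ ≤ Real.exp (6 * F + 4)
          * (2 * (4 * q' * h ^ 2 + 4 * lam ^ 2 * h ^ 2) + 2 * F ^ 2 * c₀ ^ 2 * t ^ 2) :=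
          mul_le_mul_of_nonneg_left hAM (Real.exp_pos _).le
      _ ≤ Real.exp (6 * F + 4) * ((8 * q' + 2 * F ^ 2 + 1) * R) :=
          mul_le_mul_of_nonneg_left hstep (Real.exp_pos _).le
      _ = C₁ * R := by rw [hC₁def]; ring
  -- ### pointwise bounds derived from the energy bound
  set B := Real.sqrt (C₁ * R) with hBdef
  have hB0 : 0 ≤ B := Real.sqrt_nonneg _
  have hB2 : B ^ 2 = C₁ * R := Real.sq_sqrt (mul_nonneg hC₁pos.le hR0)
  have hderivB : ∀ s : ℝ, 0 < s → s ≤ 1 / m → |deriv a s| ≤ B := by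
    intro s hs hsm
    have h2 : deriv a s ^ 2 ≤ E s := by
      rw [hEdef]
      have k1 : 0 ≤ 4 * q' * a s ^ 2 := by positivity
      have k2 : 0 ≤ 4 * lam ^ 2 * ((s ^ 2 + 1) ^ 2)⁻¹ * a s ^ 2 := by positivity
      have k3 := sq_nonneg (c s - c₀)
      simp only []
      linarith
    have h1 : deriv a s ^ 2 ≤ B ^ 2 := by
      rw [hB2]; linarith [hEbound s hs hsm]
    calc |deriv a s| = Real.sqrt (deriv a s ^ 2) := (Real.sqrt_sq_eq_abs _).symm
      _ ≤ Real.sqrt (B ^ 2) := Real.sqrt_le_sqrt h1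
      _ = B := Real.sqrt_sq hB0
  have hadiff : ∀ s : ℝ, 0 < s → s ≤ 1 / m → |a s - h| ≤ B * s := by
    intro s hs0 hsm
    have hstep : ∀ σ ∈ Ioo (0:ℝ) s, |a s - a σ| ≤ B * s := by
      intro σ hσ
      have hder : ∀ x ∈ Icc σ s, HasDerivWithinAt a (deriv a x) (Icc σ s) x := by
        intro x hx
        have hx0 : 0 < x := lt_of_lt_of_le hσ.1 hx.1
        exact ((hsol x (mem_Ioi.mpr hx0)).1.hasDerivAt).hasDerivWithinAt
      have hbd : ∀ x ∈ Icc σ s, ‖deriv a x‖ ≤ B := by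
        intro x hx
        have hx0 : 0 < x := lt_of_lt_of_le hσ.1 hx.1
        rw [Real.norm_eq_abs]
        exact hderivB x hx0 (le_trans hx.2 hsm)
      have h3 := (convex_Icc σ s).norm_image_sub_le_of_norm_hasDerivWithin_le hder hbd
        (left_mem_Icc.2 hσ.2.le) (right_mem_Icc.2 hσ.2.le)
      rw [Real.norm_eq_abs, Real.norm_eq_abs] at h3
      have h4 : |s - σ| ≤ s := by
        rw [abs_of_nonneg (by linarith [hσ.1, hσ.2] : (0:ℝ) ≤ s - σ)]
        linarith [hσ.1]
      calc |a s - a σ| ≤ B * |s - σ| := h3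
        _ ≤ B * s := mul_le_mul_of_nonneg_left h4 hB0
    have hta : Tendsto (fun σ => |a s - a σ|) (𝓝[>] (0:ℝ)) (𝓝 (|a s - h|)) :=
      (tendsto_const_nhds.sub hah).abs
    exact le_of_tendsto hta
      (by filter_upwards [Ioo_mem_nhdsGT_of_mem ⟨le_refl (0:ℝ), hs0⟩] with σ hσ
          using hstep σ hσ)
  -- ### conclusions
  intro τ hτ
  obtain ⟨ht0, htm⟩ := hτ
  have hτ1 : τ ≤ 1 := htm.trans hT1
  have hEτ := hEbound τ ht0 htm
  have hCC : C₁ * R ≤ 20 * (C₁ + 1) * R :=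
    mul_le_mul_of_nonneg_right (by linarith) hR0
  refine ⟨?_, ?_, ?_⟩
  · -- (i)
    have h4i : (1:ℝ) ≤ 4 * ((τ ^ 2 + 1) ^ 2)⁻¹ := by
      have hτ2 : τ ^ 2 ≤ 1 := pow_le_one₀ ht0.le hτ1
      have hX : (τ ^ 2 + 1) ^ 2 ≤ 4 := by nlinarith [hτ2]
      have h5 : (1:ℝ) ≤ 4 / ((τ ^ 2 + 1) ^ 2) := by
        rw [le_div_iff₀ (by positivity)]; linarith
      simpa [div_eq_mul_inv] using h5
    have hEτ2 : (1 + lam ^ 2) * a τ ^ 2 + deriv a τ ^ 2 ≤ E τ := by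
      rw [hEdef]
      simp only []
      have k1 : lam ^ 2 * a τ ^ 2 * 1 ≤ lam ^ 2 * a τ ^ 2 * (4 * ((τ ^ 2 + 1) ^ 2)⁻¹) :=
        mul_le_mul_of_nonneg_left h4i (by positivity)
      have k2 : 0 ≤ (q' - 1) * a τ ^ 2 := mul_nonneg (sub_nonneg.2 hq) (sq_nonneg (a τ))
      have k3 := sq_nonneg (c τ - c₀)
      nlinarith [k1, k2, k3]
    calc (1 + lam ^ 2) * a τ ^ 2 + deriv a τ ^ 2 ≤ E τ := hEτ2
      _ ≤ C₁ * R := hEτ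
      _ ≤ 20 * (C₁ + 1) * R := hCC
      _ = 20 * (C₁ + 1) * ((1 + lam ^ 2) * h ^ 2 + c₀ ^ 2 / m ^ 2) := by rw [hRdef]
  · -- (ii)
    have haτ := hadiff τ ht0 htm
    have h5 : |a τ| ≤ |h| + B * τ := by
      have h6 := abs_sub_abs_le_abs_sub (a τ) h
      linarith
    have h6 : a τ ^ 2 ≤ (|h| + B * τ) ^ 2 := by
      have h7 := pow_le_pow_left₀ (abs_nonneg (a τ)) h5 2
      rwa [sq_abs] at h7
    have h7 : (|h| + B * τ) ^ 2 ≤ 2 * h ^ 2 + 2 * B ^ 2 * τ ^ 2 := by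
      have h9 := helper_sqabs h (B * τ)
      have h10 : (B * τ) ^ 2 = B ^ 2 * τ ^ 2 := by ring
      linarith [h9, h10]
    have hgoal : h ^ 2 + τ ^ 2 * lam ^ 2 * h ^ 2 + τ ^ 2 * c₀ ^ 2 / m ^ 2
        = h ^ 2 + τ ^ 2 * lam ^ 2 * h ^ 2 + τ ^ 2 * (c₀ ^ 2 / m ^ 2) := by ring
    rw [hgoal]
    obtain ⟨u, hu⟩ : ∃ u : ℝ, c₀ ^ 2 / m ^ 2 = u := ⟨_, rfl⟩
    rw [hu]
    have hu0 : 0 ≤ u := by rw [← hu]; positivity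
    have hB2' : B ^ 2 = C₁ * ((1 + lam ^ 2) * h ^ 2 + u) := by
      rw [hB2, hRdef, hu]
    have hB2τ : B ^ 2 * τ ^ 2
        = C₁ * ((1 + lam ^ 2) * h ^ 2 + u) * τ ^ 2 := by rw [hB2']
    have hτ2 : τ ^ 2 ≤ 1 := pow_le_one₀ ht0.le hτ1
    have hτsq : τ ^ 2 * h ^ 2 ≤ h ^ 2 := by
      nlinarith [mul_nonneg (by linarith : (0:ℝ) ≤ 1 - τ ^ 2) (sq_nonneg h)]
    have p1 : C₁ * (τ ^ 2 * h ^ 2) ≤ C₁ * h ^ 2 :=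
      mul_le_mul_of_nonneg_left hτsq hC₁pos.le
    have p2 : (0:ℝ) ≤ C₁ * (τ ^ 2 * lam ^ 2 * h ^ 2) := mul_nonneg hC₁pos.le (by positivity)
    have p3 : (0:ℝ) ≤ C₁ * (τ ^ 2 * u) := mul_nonneg hC₁pos.le (by positivity)
    have q0 : (0:ℝ) ≤ τ ^ 2 * lam ^ 2 * h ^ 2 := by positivity
    have q1 : (0:ℝ) ≤ τ ^ 2 * u := by positivity
    have p0 : (0:ℝ) ≤ C₁ * h ^ 2 := mul_nonneg hC₁pos.le (sq_nonneg h)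
    linarith [h6, h7, hB2τ, p0, p1, p2, p3, q0, q1, sq_nonneg h]
  · -- (iii)
    have hBs : ∀ x : ℝ, 0 < x → x ≤ τ → |a x| ≤ |h| + B := by
      intro x hx0 hxτ
      have h5 := hadiff x hx0 (hxτ.trans htm)
      have h6 := abs_sub_abs_le_abs_sub (a x) h
      have h7 : B * x ≤ B := by
        calc B * x ≤ B * 1 := mul_le_mul_of_nonneg_left (by linarith [hxτ, hτ1]) hB0
          _ = B := mul_one B
      linarith
    have hcstep : ∀ σ ∈ Ioo (0:ℝ) τ, |c τ - c σ| ≤ 2 * τ * (|h| + B) * τ := by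
      intro σ hσ
      have hder : ∀ x ∈ Icc σ τ, HasDerivWithinAt c (deriv c x) (Icc σ τ) x := by
        intro x hx
        have hx0 : 0 < x := lt_of_lt_of_le hσ.1 hx.1
        exact ((hsol x (mem_Ioi.mpr hx0)).2.2.1.hasDerivAt).hasDerivWithinAt
      have hbd : ∀ x ∈ Icc σ τ, ‖deriv c x‖ ≤ 2 * τ * (|h| + B) := by
        intro x hx
        have hx0 : 0 < x := lt_of_lt_of_le hσ.1 hx.1
        have hceq := (hsol x (mem_Ioi.mpr hx0)).2.2.2.2
        rw [Real.norm_eq_abs, hceq, abs_mul, abs_of_nonneg (by linarith : (0:ℝ) ≤ 2 * x)]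
        exact mul_le_mul (by linarith [hx.2]) (hBs x hx0 hx.2) (abs_nonneg _) (by linarith)
      have h3 := (convex_Icc σ τ).norm_image_sub_le_of_norm_hasDerivWithin_le hder hbd
        (left_mem_Icc.2 hσ.2.le) (right_mem_Icc.2 hσ.2.le)
      rw [Real.norm_eq_abs, Real.norm_eq_abs] at h3
      have h4 : |τ - σ| ≤ τ := by
        rw [abs_of_nonneg (by linarith [hσ.1, hσ.2] : (0:ℝ) ≤ τ - σ)]
        linarith [hσ.1]
      calc |c τ - c σ| ≤ 2 * τ * (|h| + B) * |τ - σ| := h3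
        _ ≤ 2 * τ * (|h| + B) * τ := by
          apply mul_le_mul_of_nonneg_left h4 (by positivity)
    have htc : Tendsto (fun σ => |c τ - c σ|) (𝓝[>] (0:ℝ)) (𝓝 (|c τ - c₀|)) :=
      (tendsto_const_nhds.sub hch).abs
    have hcd : |c τ - c₀| ≤ 2 * τ ^ 2 * (|h| + B) := by
      have h8 := le_of_tendsto htc
        (by filter_upwards [Ioo_mem_nhdsGT_of_mem ⟨le_refl (0:ℝ), ht0⟩] with σ hσ
            using hcstep σ hσ)
      calc |c τ - c₀| ≤ 2 * τ * (|h| + B) * τ := h8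
        _ = 2 * τ ^ 2 * (|h| + B) := by ring
    have h5 : |c τ| ≤ |c₀| + 2 * τ ^ 2 * (|h| + B) := by
      have h6 := abs_sub_abs_le_abs_sub (c τ) c₀
      linarith
    have h6 : c τ ^ 2 ≤ (|c₀| + 2 * τ ^ 2 * (|h| + B)) ^ 2 := by
      have h7 := pow_le_pow_left₀ (abs_nonneg (c τ)) h5 2
      rwa [sq_abs] at h7
    have h7 : (|c₀| + 2 * τ ^ 2 * (|h| + B)) ^ 2
        ≤ 2 * c₀ ^ 2 + 16 * τ ^ 4 * h ^ 2 + 16 * τ ^ 4 * B ^ 2 := by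
      have hz1 := helper_sqabs c₀ (2 * τ ^ 2 * (|h| + B))
      have hz2 : (|h| + B) ^ 2 ≤ 2 * h ^ 2 + 2 * B ^ 2 := by
        have := helper_sqabs h B
        linarith
      have hz3 : (2 * τ ^ 2 * (|h| + B)) ^ 2 = 4 * τ ^ 4 * (|h| + B) ^ 2 := by ring
      have hz4 : 4 * τ ^ 4 * (|h| + B) ^ 2 ≤ 4 * τ ^ 4 * (2 * h ^ 2 + 2 * B ^ 2) :=
        mul_le_mul_of_nonneg_left hz2 (by positivity)
      linarith [hz1, hz3, hz4]
    obtain ⟨u, hu⟩ : ∃ u : ℝ, c₀ ^ 2 / m ^ 2 = u := ⟨_, rfl⟩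
    have hu0 : 0 ≤ u := by rw [← hu]; positivity
    have hB2' : B ^ 2 = C₁ * ((1 + lam ^ 2) * h ^ 2 + u) := by
      rw [hB2, hRdef, hu]
    have hB2τ4 : τ ^ 4 * B ^ 2
        = τ ^ 4 * (C₁ * ((1 + lam ^ 2) * h ^ 2 + u)) := by rw [hB2']
    have hm2 : 1 / m ^ 2 ≤ 1 := by
      rw [div_le_one (by positivity)]; nlinarith
    have hτ4 : τ ^ 4 ≤ 1 := pow_le_one₀ ht0.le hτ1
    have r0 : τ ^ 4 * u ≤ c₀ ^ 2 := by
      calc τ ^ 4 * u ≤ 1 * u := mul_le_mul_of_nonneg_right hτ4 hu0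
        _ = c₀ ^ 2 * (1 / m ^ 2) := by rw [← hu]; ring
        _ ≤ c₀ ^ 2 * 1 := mul_le_mul_of_nonneg_left hm2 (sq_nonneg c₀)
        _ = c₀ ^ 2 := mul_one _
    have r1 : C₁ * (τ ^ 4 * u) ≤ C₁ * c₀ ^ 2 :=
      mul_le_mul_of_nonneg_left r0 hC₁pos.le
    have r2 : (0:ℝ) ≤ C₁ * (τ ^ 4 * ((1 + lam ^ 2) * h ^ 2)) :=
      mul_nonneg hC₁pos.le (by positivity)
    have r3 : (0:ℝ) ≤ τ ^ 4 * lam ^ 2 * h ^ 2 := by positivity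
    have r4 : (0:ℝ) ≤ C₁ * (τ ^ 4 * (lam ^ 2 * h ^ 2)) :=
      mul_nonneg hC₁pos.le (by positivity)
    have r5 : (0:ℝ) ≤ C₁ * c₀ ^ 2 := mul_nonneg hC₁pos.le (sq_nonneg c₀)
    have r6 : (0:ℝ) ≤ τ ^ 4 * h ^ 2 := by positivity
    linarith [h6, h7, hB2τ4, r1, r2, r3, r4, r5, r6, sq_nonneg c₀, sq_nonneg h]
end

section
/- High-frequency backward estimate, single-mode version (Proposition 3.8 of the paper): there exists a constant C > 0, depending only on q' and F, such that for every τ₀ ∈ (0,1], every λ ≥ 1/(4τ₀), and every pair (a, c) solving the mode-λ model system on the interval [τ₀, 1], one has for all τ ∈ [τ₀, 1]: τ⁻¹·a(τ)² + τ·λ²·a(τ)² + τ·a'(τ)² ≤ C·( (1+λ²)·a(1)² + a'(1)² + c(1)² ). The constant C is independent of τ₀ and λ. -/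
open Set Filter

set_option maxHeartbeats 1000000

section Aux

/-- Auxiliary: basic coercivity bounds for the backward energy. -/
lemma zbasic_aux (lam s A B Cc p z : ℝ) (hlam0 : 0 < lam)
    (hs0 : 0 < s) (hs1 : s ≤ 1) (hp4 : 4 ≤ p) (hpl : lam ^ 2 ≤ p)
    (hz : z = s * B ^ 2 + A * B + A ^ 2 / (2 * s) + s * p * A ^ 2 + Cc ^ 2) :
    0 ≤ z ∧ A ^ 2 ≤ 4 * s * z ∧ s * p * A ^ 2 ≤ z ∧ s * B ^ 2 ≤ 4 * z ∧
      lam * A ^ 2 ≤ z ∧ Cc ^ 2 ≤ z ∧ 4 * (s * A ^ 2) ≤ z := by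
  have hd : A ^ 2 / (2 * s) * (2 * s) = A ^ 2 := div_mul_cancel₀ _ (by positivity)
  have hd0 : 0 ≤ A ^ 2 / (2 * s) := by positivity
  have hPA : 0 ≤ s * (p - lam ^ 2) * A ^ 2 :=
    mul_nonneg (mul_nonneg hs0.le (by linarith)) (sq_nonneg A)
  have hPA4 : 0 ≤ s * (p - 4) * A ^ 2 :=
    mul_nonneg (mul_nonneg hs0.le (by linarith)) (sq_nonneg A)
  have hsp : 0 ≤ s * p * A ^ 2 := by nlinarith [sq_nonneg A]
  have hsp2 : 0 ≤ s * (s * p * A ^ 2) := mul_nonneg hs0.le hsp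
  have hCc : 0 ≤ s * Cc ^ 2 := mul_nonneg hs0.le (sq_nonneg Cc)
  refine ⟨?_, ?_, ?_, ?_, ?_, ?_, ?_⟩
  · nlinarith [sq_nonneg (2 * s * B + A), hd, hsp2, hCc, sq_nonneg A]
  · nlinarith [sq_nonneg (2 * s * B + A), hd, hsp2, hCc, sq_nonneg A]
  · nlinarith [sq_nonneg (2 * s * B + A), hd, hCc, sq_nonneg A]
  · nlinarith [sq_nonneg (2 * s * B + 2 * A), sq_nonneg (s * B), hd, hsp2, hCc]
  · nlinarith [sq_nonneg (2 * s * B + A), hd, hPA, hCc,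
      sq_nonneg (A * (1 - 2 * lam * s)), mul_pos hlam0 hs0]
  · nlinarith [sq_nonneg (2 * s * B + A), hd, hsp2, sq_nonneg A]
  · nlinarith [sq_nonneg (2 * s * B + A), hd, hPA4, hCc, sq_nonneg A]

/-- Auxiliary: bound for the sum of forcing terms. -/
lemma tsum_aux (F s A B Cc f1 f2 f3 z : ℝ) (hF : 0 ≤ F)
    (hs0 : 0 < s) (hs1 : s ≤ 1) (hz0 : 0 ≤ z)
    (hf1 : |f1| ≤ F) (hf2 : |f2| ≤ F) (hf3 : |f3| ≤ F)
    (hA4 : A ^ 2 ≤ 4 * s * z) (hc5 : s * B ^ 2 ≤ 4 * z)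
    (hcC : Cc ^ 2 ≤ z) (hsA : 4 * (s * A ^ 2) ≤ z) :
    -((24 * F + 3) * z) ≤ f1 * (2 * s ^ 2 * B ^ 2) + f2 * (2 * s ^ 3 * A * B)
      + f3 * (2 * s * B * Cc) + f1 * (s * A * B) + f2 * (s ^ 2 * A ^ 2)
      + f3 * (A * Cc) + 4 * (s * A * Cc) := by
  have tbound : ∀ f X Y : ℝ, |f| ≤ F → |X| ≤ Y → -(F * Y) ≤ f * X := by
    intro f X Y hf hX
    have h1 : |f * X| ≤ F * Y := by
      rw [abs_mul]; exact mul_le_mul hf hX (abs_nonneg X) hF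
    have h2 := (abs_le.mp h1).1
    linarith
  have hs2le : s ^ 2 ≤ 1 := by nlinarith
  have e1 : 0 ≤ (1 - s ^ 2) * (s * A ^ 2) :=
    mul_nonneg (by linarith) (mul_nonneg hs0.le (sq_nonneg A))
  have e2 : 0 ≤ (1 - s ^ 2) * (s * B ^ 2) :=
    mul_nonneg (by linarith) (mul_nonneg hs0.le (sq_nonneg B))
  have e3 : 0 ≤ (1 - s) * Cc ^ 2 := mul_nonneg (by linarith) (sq_nonneg Cc)
  have t1 : -(F * (8 * z)) ≤ f1 * (2 * s ^ 2 * B ^ 2) := by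
    refine tbound _ _ _ hf1 ?_
    rw [abs_of_nonneg (by positivity)]
    nlinarith [hc5, hz0]
  have t2 : -(F * (5 * z)) ≤ f2 * (2 * s ^ 3 * A * B) := by
    refine tbound _ _ _ hf2 ?_
    rw [abs_le]
    constructor
    · nlinarith [mul_nonneg (pow_nonneg hs0.le 3) (sq_nonneg (A + B)), hsA, hc5, hz0, e1, e2]
    · nlinarith [mul_nonneg (pow_nonneg hs0.le 3) (sq_nonneg (A - B)), hsA, hc5, hz0, e1, e2]
  have t3 : -(F * (5 * z)) ≤ f3 * (2 * s * B * Cc) := by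
    refine tbound _ _ _ hf3 ?_
    rw [abs_le]
    constructor
    · nlinarith [mul_nonneg hs0.le (sq_nonneg (B + Cc)), hc5, hcC, hz0, e3]
    · nlinarith [mul_nonneg hs0.le (sq_nonneg (B - Cc)), hc5, hcC, hz0, e3]
  have t4 : -(F * (3 * z)) ≤ f1 * (s * A * B) := by
    refine tbound _ _ _ hf1 ?_
    rw [abs_le]
    constructor
    · nlinarith [mul_nonneg hs0.le (sq_nonneg (A + B)), hsA, hc5, hz0]
    · nlinarith [mul_nonneg hs0.le (sq_nonneg (A - B)), hsA, hc5, hz0]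
  have t5 : -(F * z) ≤ f2 * (s ^ 2 * A ^ 2) := by
    have := tbound f2 (s ^ 2 * A ^ 2) z hf2 ?_
    · linarith
    · rw [abs_of_nonneg (by positivity)]
      nlinarith [hsA, hz0, e1]
  have hACsq : A ^ 2 * Cc ^ 2 ≤ 4 * z ^ 2 := by
    nlinarith [hA4, hcC, hz0, sq_nonneg Cc, sq_nonneg A, mul_nonneg hz0 hz0]
  have t6 : -(F * (2 * z)) ≤ f3 * (A * Cc) := by
    refine tbound _ _ _ hf3 ?_
    rw [abs_le]
    exact abs_le_of_sq_le_sq' (by nlinarith [hACsq]) (by linarith)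
  have t7 : -(3 * z) ≤ 4 * (s * A * Cc) := by
    nlinarith [mul_nonneg hs0.le (sq_nonneg (A + Cc)), hsA, hcC, hz0, e3]
  nlinarith [t1, t2, t3, t4, t5, t6, t7, mul_nonneg hF hz0]

/-- Auxiliary: the key pointwise differential inequality for the backward energy. -/
lemma keypoint_aux (q' F lam s A B Cc f1 f2 f3 App p z : ℝ)
    (hq : 1 ≤ q') (hF : 0 ≤ F) (hlam0 : 0 < lam)
    (hs0 : 0 < s) (hs1 : s ≤ 1)
    (hf1 : |f1| ≤ F) (hf2 : |f2| ≤ F) (hf3 : |f3| ≤ F)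
    (hp : p = 4 * q' + 4 * lam ^ 2 * ((s ^ 2 + 1) ^ 2)⁻¹)
    (hz : z = s * B ^ 2 + A * B + A ^ 2 / (2 * s) + s * p * A ^ 2 + Cc ^ 2)
    (hApp : App + s⁻¹ * B + 4 * q' * A + 4 * lam ^ 2 * ((s ^ 2 + 1) ^ 2)⁻¹ * A
      = f1 * s * B + f2 * s ^ 2 * A + f3 * Cc) :
    0 ≤ (24 * F + 8 + (2 * lam * s ^ 2)⁻¹) * z
      + (B ^ 2 + 2 * s * B * App + (B ^ 2 + A * App)
        + (2 * A * B * (2 * s) - A ^ 2 * 2) / (2 * s) ^ 2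
        + (p * A ^ 2 + s * (-16 * lam ^ 2 * s * ((s ^ 2 + 1) ^ 3)⁻¹) * A ^ 2
            + 2 * s * p * A * B)
        + 2 * Cc * (2 * s * A)) := by
  have hp4 : 4 ≤ p := by
    rw [hp]; have : (0:ℝ) ≤ 4 * lam ^ 2 * ((s ^ 2 + 1) ^ 2)⁻¹ := by positivity
    nlinarith
  have hpl : lam ^ 2 ≤ p := by
    have h1 : (0:ℝ) < (s ^ 2 + 1) ^ 2 := by positivity
    have hs2 : s ^ 2 ≤ 1 := by nlinarith
    have h2 : (s ^ 2 + 1) ^ 2 ≤ 4 := by nlinarith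
    have h3 : (4:ℝ)⁻¹ ≤ ((s ^ 2 + 1) ^ 2)⁻¹ := inv_anti₀ h1 h2
    rw [hp]; nlinarith [sq_nonneg lam]
  obtain ⟨hz0, hA4, hc1, hc5, hzA, hcC, hsA⟩ :=
    zbasic_aux lam s A B Cc p z hlam0 hs0 hs1 hp4 hpl hz
  have hAppval : App = f1 * s * B + f2 * s ^ 2 * A + f3 * Cc - s⁻¹ * B - 4 * q' * A
      - 4 * lam ^ 2 * ((s ^ 2 + 1) ^ 2)⁻¹ * A := by linarith
  have hWeq : (B ^ 2 + 2 * s * B * App + (B ^ 2 + A * App)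
        + (2 * A * B * (2 * s) - A ^ 2 * 2) / (2 * s) ^ 2
        + (p * A ^ 2 + s * (-16 * lam ^ 2 * s * ((s ^ 2 + 1) ^ 3)⁻¹) * A ^ 2
            + 2 * s * p * A * B)
        + 2 * Cc * (2 * s * A))
      = -(A ^ 2 * (2 * s ^ 2)⁻¹) - 16 * lam ^ 2 * s ^ 2 * ((s ^ 2 + 1) ^ 3)⁻¹ * A ^ 2
        + (f1 * (2 * s ^ 2 * B ^ 2) + f2 * (2 * s ^ 3 * A * B) + f3 * (2 * s * B * Cc)
          + f1 * (s * A * B) + f2 * (s ^ 2 * A ^ 2) + f3 * (A * Cc) + 4 * (s * A * Cc)) := by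
    rw [hAppval, hp]
    have h1 : s ≠ 0 := ne_of_gt hs0
    have h2 : (s ^ 2 + 1) ≠ 0 := by positivity
    field_simp
    ring
  rw [hWeq]
  have h₁ : A ^ 2 * (2 * s ^ 2)⁻¹ ≤ (2 * lam * s ^ 2)⁻¹ * z := by
    have hpos : (0:ℝ) < (2 * lam * s ^ 2)⁻¹ := by positivity
    have he : (2 * lam * s ^ 2)⁻¹ * (lam * A ^ 2) = A ^ 2 * (2 * s ^ 2)⁻¹ := by
      field_simp
    nlinarith [mul_le_mul_of_nonneg_left hzA hpos.le]
  have h₂ : 16 * lam ^ 2 * s ^ 2 * ((s ^ 2 + 1) ^ 3)⁻¹ * A ^ 2 ≤ 4 * z := by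
    have h2 : (0:ℝ) < s ^ 2 + 1 := by positivity
    have hsplit : ((s ^ 2 + 1) ^ 3)⁻¹ = ((s ^ 2 + 1) ^ 2)⁻¹ * (s ^ 2 + 1)⁻¹ := by
      rw [pow_succ, mul_inv]
    have hfrac : s * (s ^ 2 + 1)⁻¹ ≤ 1 := by
      rw [← div_eq_mul_inv, div_le_one h2]; nlinarith
    have hu0 : (0:ℝ) ≤ ((s ^ 2 + 1) ^ 2)⁻¹ := by positivity
    have hkey : 16 * lam ^ 2 * s ^ 2 * ((s ^ 2 + 1) ^ 3)⁻¹ * A ^ 2 ≤ 4 * (s * p * A ^ 2) := by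
      rw [hsplit, hp]
      nlinarith [mul_nonneg (mul_nonneg (mul_nonneg (sq_nonneg lam) hs0.le) hu0) (sq_nonneg A),
        mul_le_mul_of_nonneg_left hfrac
          (mul_nonneg (mul_nonneg (by positivity : (0:ℝ) ≤ 16 * lam ^ 2 * s) hu0) (sq_nonneg A)),
        mul_nonneg (mul_nonneg hs0.le (by linarith : (0:ℝ) ≤ q')) (sq_nonneg A)]
    linarith [hc1]
  have hT := tsum_aux F s A B Cc f1 f2 f3 z hF hs0 hs1 hz0 hf1 hf2 hf3 hA4 hc5 hcC hsA
  clear hWeq hAppval hApp hz hp hzA hc1 hA4 hc5 hcC hsA hpl hp4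
  nlinarith [h₁, h₂, hT, hz0, mul_nonneg hF hz0]

/-- Auxiliary: the frequency weight. -/
noncomputable def Pfun (q' lam s : ℝ) : ℝ := 4 * q' + 4 * lam ^ 2 * ((s ^ 2 + 1) ^ 2)⁻¹

/-- Auxiliary: the backward energy. -/
noncomputable def Zfun (q' lam : ℝ) (a c : ℝ → ℝ) (s : ℝ) : ℝ :=
  s * deriv a s ^ 2 + a s * deriv a s + a s ^ 2 / (2 * s)
    + s * Pfun q' lam s * a s ^ 2 + c s ^ 2

/-- Auxiliary: derivative of the backward energy. -/
noncomputable def Zdfun (q' lam : ℝ) (a c : ℝ → ℝ) (s : ℝ) : ℝ :=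
  deriv a s ^ 2 + 2 * s * deriv a s * deriv (deriv a) s
    + (deriv a s ^ 2 + a s * deriv (deriv a) s)
    + (2 * a s * deriv a s * (2 * s) - a s ^ 2 * 2) / (2 * s) ^ 2
    + (Pfun q' lam s * a s ^ 2 + s * (-16 * lam ^ 2 * s * ((s ^ 2 + 1) ^ 3)⁻¹) * a s ^ 2
        + 2 * s * Pfun q' lam s * a s * deriv a s)
    + 2 * c s * (2 * s * a s)

/-- Auxiliary: the weighted (Gronwall) energy. -/
noncomputable def gfun (q' F lam : ℝ) (a c : ℝ → ℝ) (s : ℝ) : ℝ :=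
  Real.exp ((24 * F + 8) * s - (2 * lam * s)⁻¹) * Zfun q' lam a c s

lemma Pfun_hasDeriv (q' lam s : ℝ) :
    HasDerivAt (Pfun q' lam) (-16 * lam ^ 2 * s * ((s ^ 2 + 1) ^ 3)⁻¹) s := by
  have h1 : HasDerivAt (fun t : ℝ => (t ^ 2 + 1) ^ 2)
      (2 * (s ^ 2 + 1) ^ 1 * (2 * s ^ 1)) s :=
    ((hasDerivAt_pow 2 s).add_const 1).pow 2
  have h2 := h1.inv (by positivity)
  have h3 := (h2.const_mul (4 * lam ^ 2)).const_add (4 * q')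
  refine h3.congr_deriv ?_
  field_simp
  ring

lemma Pfun_bounds (q' lam s : ℝ) (hq : 1 ≤ q') (hs0 : 0 < s) (hs1 : s ≤ 1) :
    4 ≤ Pfun q' lam s ∧ lam ^ 2 ≤ Pfun q' lam s := by
  have h1 : (0:ℝ) < (s ^ 2 + 1) ^ 2 := by positivity
  have hs2 : s ^ 2 ≤ 1 := by nlinarith
  have h2 : (s ^ 2 + 1) ^ 2 ≤ 4 := by nlinarith
  have h3 : (4:ℝ)⁻¹ ≤ ((s ^ 2 + 1) ^ 2)⁻¹ := inv_anti₀ h1 h2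
  have h4 : (0:ℝ) ≤ 4 * lam ^ 2 * ((s ^ 2 + 1) ^ 2)⁻¹ := by positivity
  constructor
  · simp only [Pfun]; nlinarith
  · simp only [Pfun]; nlinarith [sq_nonneg lam]

lemma Zfun_hasDeriv (q' lam : ℝ) (a c : ℝ → ℝ) (s : ℝ) (hs : s ≠ 0)
    (hA : DifferentiableAt ℝ a s) (hB : DifferentiableAt ℝ (deriv a) s)
    (hC : DifferentiableAt ℝ c s) (hcd : deriv c s = 2 * s * a s) :
    HasDerivAt (Zfun q' lam a c) (Zdfun q' lam a c s) s := by
  have hA' := hA.hasDerivAt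
  have hB' := hB.hasDerivAt
  have hC' := hC.hasDerivAt
  have p1 : HasDerivAt (fun t => t * deriv a t ^ 2)
      (1 * deriv a s ^ 2 + s * (2 * deriv a s ^ 1 * deriv (deriv a) s)) s :=
    (hasDerivAt_id' s).mul (hB'.pow 2)
  have p2 : HasDerivAt (fun t => a t * deriv a t)
      (deriv a s * deriv a s + a s * deriv (deriv a) s) s := hA'.mul hB'
  have p3 : HasDerivAt (fun t => a t ^ 2 / (2 * t))
      ((2 * a s ^ 1 * deriv a s * (2 * s) - a s ^ 2 * (2 * 1)) / (2 * s) ^ 2) s :=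
    (hA'.pow 2).div ((hasDerivAt_id' s).const_mul 2) (by simpa using hs)
  have p4 : HasDerivAt (fun t => t * Pfun q' lam t * a t ^ 2)
      ((1 * Pfun q' lam s + s * (-16 * lam ^ 2 * s * ((s ^ 2 + 1) ^ 3)⁻¹)) * a s ^ 2
        + s * Pfun q' lam s * (2 * a s ^ 1 * deriv a s)) s :=
    ((hasDerivAt_id' s).mul (Pfun_hasDeriv q' lam s)).mul (hA'.pow 2)
  have p5 : HasDerivAt (fun t => c t ^ 2) (2 * c s ^ 1 * deriv c s) s := hC'.pow 2
  have := (((p1.add p2).add p3).add p4).add p5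
  refine this.congr_deriv ?_
  simp only [Zdfun]
  rw [hcd]
  ring

lemma gfun_hasDeriv (q' F lam : ℝ) (a c : ℝ → ℝ) (s W : ℝ) (hs : s ≠ 0) (hl : lam ≠ 0)
    (hZ : HasDerivAt (Zfun q' lam a c) W s) :
    HasDerivAt (gfun q' F lam a c)
      (Real.exp ((24 * F + 8) * s - (2 * lam * s)⁻¹)
        * ((24 * F + 8 + (2 * lam * s ^ 2)⁻¹) * Zfun q' lam a c s + W)) s := by
  have h2s : (2 : ℝ) * lam * s ≠ 0 := by simp [hs, hl]
  have h1 : HasDerivAt (fun t : ℝ => (24 * F + 8) * t) (24 * F + 8) s := by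
    simpa using (hasDerivAt_id' s).const_mul (24 * F + 8)
  have h2 : HasDerivAt (fun t : ℝ => 2 * lam * t) (2 * lam) s := by
    simpa using (hasDerivAt_id' s).const_mul (2 * lam)
  have h3 := h2.inv h2s
  have hφ : HasDerivAt (fun t : ℝ => (24 * F + 8) * t - (2 * lam * t)⁻¹)
      (24 * F + 8 + (2 * lam * s ^ 2)⁻¹) s := by
    refine (h1.sub h3).congr_deriv ?_
    field_simp
    ring
  have := (hφ.exp).mul hZ
  refine this.congr_deriv ?_
  ring

end Aux

/-- High-frequency backward estimate (single-mode version of Proposition 3.8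
of the paper). -/
theorem highFrequency_backward_estimate (q' F : ℝ) (hq : 1 ≤ q') (hF : 0 ≤ F) :
    ∃ C > 0, ∀ f₁ f₂ f₃ : ℝ → ℝ,
      ContinuousOn f₁ (Ici 0) → ContinuousOn f₂ (Ici 0) → ContinuousOn f₃ (Ici 0) →
      (∀ τ ≥ (0:ℝ), |f₁ τ| ≤ F) → (∀ τ ≥ (0:ℝ), |f₂ τ| ≤ F) → (∀ τ ≥ (0:ℝ), |f₃ τ| ≤ F) →
      ∀ τ₀ lam : ℝ, τ₀ ∈ Ioc (0:ℝ) 1 → 1 / (4 * τ₀) ≤ lam →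
      ∀ a c : ℝ → ℝ,
      SolvesModelSystem q' f₁ f₂ f₃ lam a c (Icc τ₀ 1) →
      ∀ τ ∈ Icc τ₀ 1,
        τ⁻¹ * a τ ^ 2 + τ * lam ^ 2 * a τ ^ 2 + τ * deriv a τ ^ 2
          ≤ C * ((1 + lam ^ 2) * a 1 ^ 2 + deriv a 1 ^ 2 + c 1 ^ 2) := by
  refine ⟨9 * Real.exp (24 * F + 10) * (4 * q' + 2), by positivity, ?_⟩
  intro f₁ f₂ f₃ _ _ _ hb₁ hb₂ hb₃ τ₀ lam hτ₀ hlam a c hsol τ hτ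
  obtain ⟨hτ₀pos, hτ₀le⟩ := hτ₀
  have hlam0 : 0 < lam := lt_of_lt_of_le (by positivity) hlam
  have hlam4 : 1 ≤ 4 * lam * τ₀ := by
    rw [div_le_iff₀ (by positivity)] at hlam; nlinarith
  have hmem1 : (1:ℝ) ∈ Icc τ₀ 1 := ⟨hτ₀le, le_refl 1⟩
  have hτ0 : 0 < τ := lt_of_lt_of_le hτ₀pos hτ.1
  -- basic energy bounds on the interval
  have hZb : ∀ s ∈ Icc τ₀ (1:ℝ),
      0 ≤ Zfun q' lam a c s ∧ a s ^ 2 ≤ 4 * s * Zfun q' lam a c s ∧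
      s * Pfun q' lam s * a s ^ 2 ≤ Zfun q' lam a c s ∧
      s * deriv a s ^ 2 ≤ 4 * Zfun q' lam a c s ∧
      lam * a s ^ 2 ≤ Zfun q' lam a c s ∧ c s ^ 2 ≤ Zfun q' lam a c s ∧
      4 * (s * a s ^ 2) ≤ Zfun q' lam a c s := by
    intro s hs
    have hs0 : 0 < s := lt_of_lt_of_le hτ₀pos hs.1
    obtain ⟨hp4, hpl⟩ := Pfun_bounds q' lam s hq hs0 hs.2
    exact zbasic_aux lam s (a s) (deriv a s) (c s) (Pfun q' lam s)
      (Zfun q' lam a c s) hlam0 hs0 hs.2 hp4 hpl rfl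
  -- the weighted energy has the computed derivative at every point of the interval
  have hg' : ∀ s ∈ Icc τ₀ (1:ℝ), HasDerivAt (gfun q' F lam a c)
      (Real.exp ((24 * F + 8) * s - (2 * lam * s)⁻¹)
        * ((24 * F + 8 + (2 * lam * s ^ 2)⁻¹) * Zfun q' lam a c s
            + Zdfun q' lam a c s)) s := by
    intro s hs
    have hs0 : 0 < s := lt_of_lt_of_le hτ₀pos hs.1
    obtain ⟨hA, hB, hC, _, hcd⟩ := hsol s hs
    exact gfun_hasDeriv q' F lam a c s _ (ne_of_gt hs0) (ne_of_gt hlam0)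
      (Zfun_hasDeriv q' lam a c s (ne_of_gt hs0) hA hB hC hcd)
  have hcont : ContinuousOn (gfun q' F lam a c) (Icc τ₀ 1) :=
    fun s hs => ((hg' s hs).continuousAt).continuousWithinAt
  -- monotonicity of the weighted energy
  have hmono : MonotoneOn (gfun q' F lam a c) (Icc τ₀ 1) := by
    refine monotoneOn_of_hasDerivWithinAt_nonneg (convex_Icc _ _) hcont
      (f' := fun s => Real.exp ((24 * F + 8) * s - (2 * lam * s)⁻¹)
        * ((24 * F + 8 + (2 * lam * s ^ 2)⁻¹) * Zfun q' lam a c s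
            + Zdfun q' lam a c s)) ?_ ?_
    · intro x hx
      rw [interior_Icc] at hx
      exact (hg' x (Ioo_subset_Icc_self hx)).hasDerivWithinAt
    · intro x hx
      rw [interior_Icc] at hx
      have hx' : x ∈ Icc τ₀ 1 := Ioo_subset_Icc_self hx
      have hx0 : 0 < x := lt_of_lt_of_le hτ₀pos hx'.1
      obtain ⟨hA, hB, hC, hE, hcd⟩ := hsol x hx'
      refine mul_nonneg (Real.exp_pos _).le ?_
      have hkp := keypoint_aux q' F lam x (a x) (deriv a x) (c x)
        (f₁ x) (f₂ x) (f₃ x) (deriv (deriv a) x) (Pfun q' lam x) (Zfun q' lam a c x)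
        hq hF hlam0 hx0 hx'.2 (hb₁ x hx0.le) (hb₂ x hx0.le) (hb₃ x hx0.le)
        rfl rfl (by linarith [hE])
      simpa only [Zdfun] using hkp
  -- Gronwall conclusion
  have hZ1 : 0 ≤ Zfun q' lam a c 1 := (hZb 1 hmem1).1
  have hZle : Zfun q' lam a c τ ≤ Real.exp (24 * F + 10) * Zfun q' lam a c 1 := by
    have h1 : gfun q' F lam a c τ ≤ gfun q' F lam a c 1 := hmono hτ hmem1 hτ.2
    have hginv : (2 * lam * τ)⁻¹ ≤ 2 := by
      have hge : (1:ℝ)/2 ≤ 2 * lam * τ := by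
        nlinarith [mul_nonneg hlam0.le (sub_nonneg.2 hτ.1), hlam4]
      calc (2 * lam * τ)⁻¹ ≤ ((1:ℝ)/2)⁻¹ := inv_anti₀ (by norm_num) hge
        _ = 2 := by norm_num
    have hφle : (24 * F + 8) * 1 - (2 * lam * 1)⁻¹
        ≤ ((24 * F + 8) * τ - (2 * lam * τ)⁻¹) + (24 * F + 10) := by
      have h2 : (0:ℝ) ≤ (2 * lam)⁻¹ := by positivity
      have h3 : (2 * lam * (1:ℝ))⁻¹ = (2 * lam)⁻¹ := by norm_num
      rw [h3]
      nlinarith [hF, hτ0.le, hτ.2]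
    have h2 : gfun q' F lam a c 1
        ≤ Real.exp ((24 * F + 8) * τ - (2 * lam * τ)⁻¹) * (Real.exp (24 * F + 10)
            * Zfun q' lam a c 1) := by
      unfold gfun
      calc Real.exp ((24 * F + 8) * 1 - (2 * lam * 1)⁻¹) * Zfun q' lam a c 1
          ≤ Real.exp (((24 * F + 8) * τ - (2 * lam * τ)⁻¹) + (24 * F + 10))
              * Zfun q' lam a c 1 :=
            mul_le_mul_of_nonneg_right (Real.exp_le_exp.2 hφle) hZ1
        _ = _ := by rw [Real.exp_add]; ring
    have h3 : gfun q' F lam a c τ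
        ≤ Real.exp ((24 * F + 8) * τ - (2 * lam * τ)⁻¹) * (Real.exp (24 * F + 10)
            * Zfun q' lam a c 1) := le_trans h1 h2
    unfold gfun at h3
    exact le_of_mul_le_mul_left h3 (Real.exp_pos _)
  -- final assembly
  obtain ⟨hz0τ, hA4, hc1, hc5, _, _, _⟩ := hZb τ hτ
  obtain ⟨_, hplτ⟩ := Pfun_bounds q' lam τ hq hτ0 hτ.2
  have hLHS : τ⁻¹ * a τ ^ 2 + τ * lam ^ 2 * a τ ^ 2 + τ * deriv a τ ^ 2
      ≤ 9 * Zfun q' lam a c τ := by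
    have h1 : τ⁻¹ * a τ ^ 2 ≤ 4 * Zfun q' lam a c τ := by
      rw [inv_mul_le_iff₀ hτ0]
      nlinarith [hA4]
    have h2 : τ * lam ^ 2 * a τ ^ 2 ≤ Zfun q' lam a c τ := by
      nlinarith [hc1, mul_nonneg (mul_nonneg hτ0.le (sub_nonneg.2 hplτ)) (sq_nonneg (a τ))]
    linarith [hc5]
  have hP1 : Pfun q' lam 1 = 4 * q' + lam ^ 2 := by
    simp only [Pfun]; norm_num; ring
  have hZ1le : Zfun q' lam a c 1
      ≤ (4 * q' + 2) * ((1 + lam ^ 2) * a 1 ^ 2 + deriv a 1 ^ 2 + c 1 ^ 2) := by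
    simp only [Zfun, hP1]
    norm_num
    nlinarith [sq_nonneg (a 1 - deriv a 1), sq_nonneg (a 1), sq_nonneg (deriv a 1),
      sq_nonneg (c 1), mul_nonneg (sq_nonneg lam) (sq_nonneg (a 1)), hq,
      mul_nonneg (mul_nonneg (by linarith : (0:ℝ) ≤ q') (sq_nonneg lam)) (sq_nonneg (a 1)),
      mul_nonneg (by linarith : (0:ℝ) ≤ q') (sq_nonneg (a 1)),
      mul_nonneg (by linarith : (0:ℝ) ≤ q') (sq_nonneg (deriv a 1)),
      mul_nonneg (by linarith : (0:ℝ) ≤ q') (sq_nonneg (c 1))]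
  calc τ⁻¹ * a τ ^ 2 + τ * lam ^ 2 * a τ ^ 2 + τ * deriv a τ ^ 2
      ≤ 9 * Zfun q' lam a c τ := hLHS
    _ ≤ 9 * (Real.exp (24 * F + 10) * Zfun q' lam a c 1) := by linarith [hZle]
    _ ≤ 9 * (Real.exp (24 * F + 10)
          * ((4 * q' + 2) * ((1 + lam ^ 2) * a 1 ^ 2 + deriv a 1 ^ 2 + c 1 ^ 2))) := by
        have := mul_le_mul_of_nonneg_left hZ1le (Real.exp_pos (24 * F + 10)).le
        linarith
    _ = 9 * Real.exp (24 * F + 10) * (4 * q' + 2)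
          * ((1 + lam ^ 2) * a 1 ^ 2 + deriv a 1 ^ 2 + c 1 ^ 2) := by ring
end

section
/- Non-sharp backward growth estimates, single-mode version (Proposition 3.12 of the paper): there exists a constant C > 0, depending only on q' and F, such that for every λ ≥ 0 and every pair (a, c) solving the mode-λ model system on the interval (0, 1], one has for all τ ∈ (0, 1]: (i) a(τ)² ≤ C·(1 + (log τ)²)·( (1+λ²)·a(1)² + a'(1)² + c(1)² ); (ii) (τ·a'(τ))² ≤ C·( (1+λ²)·a(1)² + a'(1)² + c(1)² ). -/
open Set Filter

set_option maxHeartbeats 1600000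

/-- Energy function. -/
noncomputable def Ef (q' lam : ℝ) (a c : ℝ → ℝ) (s : ℝ) : ℝ :=
  (s * deriv a s) ^ 2 + 4 * q' * s ^ 2 * (a s) ^ 2
    + 4 * lam ^ 2 * (s ^ 2 / (s ^ 2 + 1) ^ 2) * (a s) ^ 2 + (c s) ^ 2

lemma Ef_key (q' F : ℝ) (hq : 1 ≤ q') (hF : 0 ≤ F)
    (f₁ f₂ f₃ : ℝ → ℝ)
    (hf₁ : ∀ τ ≥ (0:ℝ), |f₁ τ| ≤ F) (hf₂ : ∀ τ ≥ (0:ℝ), |f₂ τ| ≤ F)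
    (hf₃ : ∀ τ ≥ (0:ℝ), |f₃ τ| ≤ F)
    (lam : ℝ) (a c : ℝ → ℝ)
    (hda : ∀ τ ∈ Ioc (0:ℝ) 1, DifferentiableAt ℝ a τ)
    (hda' : ∀ τ ∈ Ioc (0:ℝ) 1, DifferentiableAt ℝ (deriv a) τ)
    (hdc : ∀ τ ∈ Ioc (0:ℝ) 1, DifferentiableAt ℝ c τ)
    (hode : ∀ τ ∈ Ioc (0:ℝ) 1,
      deriv (deriv a) τ + τ⁻¹ * deriv a τ + 4 * q' * a τ
        + 4 * lam ^ 2 * ((τ ^ 2 + 1) ^ 2)⁻¹ * a τ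
      = f₁ τ * τ * deriv a τ + f₂ τ * τ ^ 2 * a τ + f₃ τ * c τ)
    (hcode : ∀ τ ∈ Ioc (0:ℝ) 1, deriv c τ = 2 * τ * a τ)
    (τ : ℝ) (hτ : τ ∈ Ioc (0:ℝ) 1) :
    ∃ d : ℝ, HasDerivAt (Ef q' lam a c) d τ ∧ 0 ≤ d + (4 * F + 2) * Ef q' lam a c τ := by
  obtain ⟨hτ0, hτ1⟩ := hτ
  have hτne : τ ≠ 0 := ne_of_gt hτ0
  have hτsq : 0 ≤ 1 - τ ^ 2 := by nlinarith [hτ0, hτ1]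
  have hden : ((τ:ℝ) ^ 2 + 1) ^ 2 ≠ 0 := by positivity
  have hden1 : ((τ:ℝ) ^ 2 + 1) ≠ 0 := by positivity
  have Ha : HasDerivAt a (deriv a τ) τ := (hda τ ⟨hτ0, hτ1⟩).hasDerivAt
  have Ha' : HasDerivAt (deriv a) (deriv (deriv a) τ) τ := (hda' τ ⟨hτ0, hτ1⟩).hasDerivAt
  have Hc : HasDerivAt c (2 * τ * a τ) τ := by
    rw [← hcode τ ⟨hτ0, hτ1⟩]; exact (hdc τ ⟨hτ0, hτ1⟩).hasDerivAt
  have heq := hode τ ⟨hτ0, hτ1⟩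
  have hA''eq : deriv (deriv a) τ = f₁ τ * τ * deriv a τ + f₂ τ * τ ^ 2 * a τ + f₃ τ * c τ
      - τ⁻¹ * deriv a τ - 4 * q' * a τ - 4 * lam ^ 2 * ((τ ^ 2 + 1) ^ 2)⁻¹ * a τ := by
    linarith [heq]
  have hE : HasDerivAt (Ef q' lam a c)
      (8 * q' * τ * (a τ) ^ 2
        + 4 * lam ^ 2 * ((2 * τ * (1 - τ ^ 2)) / (τ ^ 2 + 1) ^ 3) * (a τ) ^ 2
        + 2 * f₁ τ * τ * (τ * deriv a τ) ^ 2
        + 2 * f₂ τ * τ ^ 2 * (τ * deriv a τ) * (τ * a τ)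
        + 2 * f₃ τ * τ * (τ * deriv a τ) * (c τ)
        + 4 * τ * (a τ) * (c τ)) τ := by
    have h1 : HasDerivAt (fun s => (s * deriv a s) ^ 2)
        ((2:ℕ) * (τ * deriv a τ) ^ 1 * (1 * deriv a τ + τ * deriv (deriv a) τ)) τ :=
      ((hasDerivAt_id τ).mul Ha').pow 2
    have h2 : HasDerivAt (fun s => 4 * q' * s ^ 2 * (a s) ^ 2)
        (((4 * q') * ((2:ℕ) * τ ^ 1)) * (a τ) ^ 2
          + (4 * q' * τ ^ 2) * ((2:ℕ) * (a τ) ^ 1 * deriv a τ)) τ :=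
      HasDerivAt.mul ((hasDerivAt_pow 2 τ).const_mul (4 * q')) (Ha.pow 2)
    have hw := (hasDerivAt_pow 2 τ).div (((hasDerivAt_pow 2 τ).add_const 1).pow 2) hden
    have h3 := HasDerivAt.mul (hw.const_mul (4 * lam ^ 2)) (Ha.pow 2)
    have h4 : HasDerivAt (fun s => (c s) ^ 2) ((2:ℕ) * (c τ) ^ 1 * (2 * τ * a τ)) τ :=
      Hc.pow 2
    have h := ((h1.add h2).add h3).add h4
    have hEf : Ef q' lam a c = fun s =>
        ((fun s => (s * deriv a s) ^ 2) s + (fun s => 4 * q' * s ^ 2 * (a s) ^ 2) s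
          + (fun s => 4 * lam ^ 2 * (s ^ 2 / (s ^ 2 + 1) ^ 2) * (a s) ^ 2) s)
          + (fun s => (c s) ^ 2) s := rfl
    rw [hEf]
    refine h.congr_deriv ?_
    rw [hA''eq]
    simp only [Pi.pow_apply, Pi.div_apply]
    push_cast
    field_simp
    ring
  refine ⟨_, hE, ?_⟩
  -- the inequality
  have hF1 := hf₁ τ hτ0.le
  have hF2 := hf₂ τ hτ0.le
  have hF3 := hf₃ τ hτ0.le
  rw [abs_le] at hF1 hF2 hF3
  set A := a τ with hA
  set A' := deriv a τ with hA'
  set Cv := c τ with hCv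
  set u := τ * A' with hu
  set v := τ * A with hv
  have hw' : 0 ≤ 4 * lam ^ 2 * ((2 * τ * (1 - τ ^ 2)) / (τ ^ 2 + 1) ^ 3) * A ^ 2 := by
    positivity
  have hElower : u ^ 2 + 4 * v ^ 2 + Cv ^ 2 ≤ Ef q' lam a c τ := by
    have hlam : 0 ≤ 4 * lam ^ 2 * (τ ^ 2 / (τ ^ 2 + 1) ^ 2) * A ^ 2 := by positivity
    have hv2 : v ^ 2 = τ ^ 2 * A ^ 2 := by rw [hv]; ring
    have hq1 : 0 ≤ (q' - 1) * (τ ^ 2 * A ^ 2) :=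
      mul_nonneg (by linarith) (by positivity)
    simp only [Ef, ← hA, ← hA', ← hCv, ← hu]
    nlinarith [hlam, hq1, hv2]
  have hb1 : -(2 * F * u ^ 2) ≤ 2 * f₁ τ * τ * u ^ 2 := by
    have e : 2 * f₁ τ * τ * u ^ 2 + 2 * F * u ^ 2
        = 2 * (τ * ((F + f₁ τ) * u ^ 2)) + 2 * ((1 - τ) * (F * u ^ 2)) := by ring
    have p1 : 0 ≤ τ * ((F + f₁ τ) * u ^ 2) :=
      mul_nonneg hτ0.le (mul_nonneg (by linarith [hF1.1]) (sq_nonneg u))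
    have p2 : 0 ≤ (1 - τ) * (F * u ^ 2) :=
      mul_nonneg (by linarith) (mul_nonneg hF (sq_nonneg u))
    linarith
  have hb2 : -(F * (u ^ 2 + v ^ 2)) ≤ 2 * f₂ τ * τ ^ 2 * u * v := by
    have e : 2 * f₂ τ * τ ^ 2 * u * v + F * (u ^ 2 + v ^ 2)
        = τ ^ 2 * ((F + f₂ τ) * (u + v) ^ 2) / 2 + τ ^ 2 * ((F - f₂ τ) * (u - v) ^ 2) / 2
          + (1 - τ ^ 2) * (F * (u ^ 2 + v ^ 2)) := by ring
    have p1 : 0 ≤ τ ^ 2 * ((F + f₂ τ) * (u + v) ^ 2) :=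
      mul_nonneg (sq_nonneg τ) (mul_nonneg (by linarith [hF2.1]) (sq_nonneg _))
    have p2 : 0 ≤ τ ^ 2 * ((F - f₂ τ) * (u - v) ^ 2) :=
      mul_nonneg (sq_nonneg τ) (mul_nonneg (by linarith [hF2.2]) (sq_nonneg _))
    have p3 : 0 ≤ (1 - τ ^ 2) * (F * (u ^ 2 + v ^ 2)) :=
      mul_nonneg (by linarith [hτsq]) (mul_nonneg hF (by positivity))
    linarith
  have hb3 : -(F * (u ^ 2 + Cv ^ 2)) ≤ 2 * f₃ τ * τ * u * Cv := by
    have e : 2 * f₃ τ * τ * u * Cv + F * (u ^ 2 + Cv ^ 2)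
        = τ * ((F + f₃ τ) * (u + Cv) ^ 2) / 2 + τ * ((F - f₃ τ) * (u - Cv) ^ 2) / 2
          + (1 - τ) * (F * (u ^ 2 + Cv ^ 2)) := by ring
    have p1 : 0 ≤ τ * ((F + f₃ τ) * (u + Cv) ^ 2) :=
      mul_nonneg hτ0.le (mul_nonneg (by linarith [hF3.1]) (sq_nonneg _))
    have p2 : 0 ≤ τ * ((F - f₃ τ) * (u - Cv) ^ 2) :=
      mul_nonneg hτ0.le (mul_nonneg (by linarith [hF3.2]) (sq_nonneg _))
    have p3 : 0 ≤ (1 - τ) * (F * (u ^ 2 + Cv ^ 2)) :=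
      mul_nonneg (by linarith) (mul_nonneg hF (by positivity))
    linarith
  have hb4 : -(2 * (v ^ 2 + Cv ^ 2)) ≤ 4 * τ * A * Cv := by
    rw [hv]
    nlinarith [sq_nonneg (τ * A + Cv)]
  have hq'τ : 0 ≤ 8 * q' * τ * A ^ 2 := by positivity
  have hF4 : 0 ≤ 4 * F + 2 := by linarith
  have hmul := mul_le_mul_of_nonneg_left hElower hF4
  have hnn1 : 0 ≤ F * u ^ 2 := mul_nonneg hF (sq_nonneg u)
  have hnn2 : 0 ≤ F * v ^ 2 := mul_nonneg hF (sq_nonneg v)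
  have hnn3 : 0 ≤ F * Cv ^ 2 := mul_nonneg hF (sq_nonneg Cv)
  nlinarith [hmul, hb1, hb2, hb3, hb4, hw', hq'τ, hnn1, hnn2, hnn3, sq_nonneg u, sq_nonneg v, sq_nonneg Cv]


lemma Ef_def (q' lam : ℝ) (a c : ℝ → ℝ) (s : ℝ) :
  Ef q' lam a c s = (s * deriv a s) ^ 2 + 4 * q' * s ^ 2 * (a s) ^ 2
    + 4 * lam ^ 2 * (s ^ 2 / (s ^ 2 + 1) ^ 2) * (a s) ^ 2 + (c s) ^ 2 := rfl



lemma Ef_bound (q' F : ℝ) (hq : 1 ≤ q') (hF : 0 ≤ F)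
    (f₁ f₂ f₃ : ℝ → ℝ)
    (hf₁ : ∀ τ ≥ (0:ℝ), |f₁ τ| ≤ F) (hf₂ : ∀ τ ≥ (0:ℝ), |f₂ τ| ≤ F)
    (hf₃ : ∀ τ ≥ (0:ℝ), |f₃ τ| ≤ F)
    (lam : ℝ) (a c : ℝ → ℝ)
    (hda : ∀ τ ∈ Ioc (0:ℝ) 1, DifferentiableAt ℝ a τ)
    (hda' : ∀ τ ∈ Ioc (0:ℝ) 1, DifferentiableAt ℝ (deriv a) τ)
    (hdc : ∀ τ ∈ Ioc (0:ℝ) 1, DifferentiableAt ℝ c τ)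
    (hode : ∀ τ ∈ Ioc (0:ℝ) 1,
      deriv (deriv a) τ + τ⁻¹ * deriv a τ + 4 * q' * a τ
        + 4 * lam ^ 2 * ((τ ^ 2 + 1) ^ 2)⁻¹ * a τ
      = f₁ τ * τ * deriv a τ + f₂ τ * τ ^ 2 * a τ + f₃ τ * c τ)
    (hcode : ∀ τ ∈ Ioc (0:ℝ) 1, deriv c τ = 2 * τ * a τ)
    (t : ℝ) (ht : t ∈ Ioc (0:ℝ) 1) :
    Ef q' lam a c t ≤ 4 * q' * Real.exp (4 * F + 2)
      * ((1 + lam ^ 2) * a 1 ^ 2 + deriv a 1 ^ 2 + c 1 ^ 2) := by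
  obtain ⟨ht0, ht1⟩ := ht
  have hq0 : (0:ℝ) < q' := lt_of_lt_of_le one_pos hq
  have hg0 : (0:ℝ) < 4 * F + 2 := by linarith
  set V : ℝ → ℝ := fun s => Ef q' lam a c s * Real.exp ((4 * F + 2) * s) with hV
  have hsub : Icc t 1 ⊆ Ioc (0:ℝ) 1 := fun x hx => ⟨lt_of_lt_of_le ht0 hx.1, hx.2⟩
  have hVd : ∀ x ∈ Ioc (0:ℝ) 1, ∃ d, HasDerivAt V d x ∧ 0 ≤ d := by
    intro x hx
    obtain ⟨d, hd, hdpos⟩ := Ef_key q' F hq hF f₁ f₂ f₃ hf₁ hf₂ hf₃ lam a c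
      hda hda' hdc hode hcode x hx
    have hexp : HasDerivAt (fun s => Real.exp ((4 * F + 2) * s)) (Real.exp ((4 * F + 2) * x) * ((4 * F + 2) * 1)) x :=
      ((hasDerivAt_id x).const_mul (4 * F + 2)).exp
    refine ⟨_, hd.mul hexp, ?_⟩
    have h1 := mul_nonneg (le_of_lt (Real.exp_pos ((4 * F + 2) * x))) hdpos
    nlinarith [h1]
  have hmono : MonotoneOn V (Icc t 1) := by
    apply monotoneOn_of_deriv_nonneg (convex_Icc t 1)
    · intro x hx
      obtain ⟨d, hd, _⟩ := hVd x (hsub hx)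
      exact hd.continuousAt.continuousWithinAt
    · intro x hx
      rw [interior_Icc] at hx
      obtain ⟨d, hd, _⟩ := hVd x ⟨lt_trans ht0 hx.1, le_of_lt hx.2⟩
      exact hd.differentiableAt.differentiableWithinAt
    · intro x hx
      rw [interior_Icc] at hx
      obtain ⟨d, hd, hdpos⟩ := hVd x ⟨lt_trans ht0 hx.1, le_of_lt hx.2⟩
      rw [hd.deriv]; exact hdpos
  have hVle : V t ≤ V 1 := hmono ⟨le_refl t, ht1⟩ ⟨ht1, le_refl 1⟩ ht1
  have hEt0 : 0 ≤ Ef q' lam a c t := by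
    rw [Ef_def]; positivity
  have h1 : Ef q' lam a c t ≤ V t := by
    show Ef q' lam a c t ≤ Ef q' lam a c t * Real.exp ((4 * F + 2) * t)
    have hh : (1:ℝ) ≤ Real.exp ((4 * F + 2) * t) := by
      rw [← Real.exp_zero]
      exact Real.exp_le_exp.mpr (by positivity)
    nlinarith [hh, hEt0]
  have hE1 : Ef q' lam a c 1 = deriv a 1 ^ 2 + 4 * q' * a 1 ^ 2 + lam ^ 2 * a 1 ^ 2 + c 1 ^ 2 := by
    rw [Ef_def]; norm_num; left; ring
  have h2 : V 1 ≤ 4 * q' * Real.exp (4 * F + 2) * ((1 + lam ^ 2) * a 1 ^ 2 + deriv a 1 ^ 2 + c 1 ^ 2) := by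
    show Ef q' lam a c 1 * Real.exp ((4 * F + 2) * 1) ≤ _
    rw [mul_one, hE1]
    have hexp0 : (0:ℝ) < Real.exp (4 * F + 2) := Real.exp_pos _
    have e1 : 0 ≤ Real.exp (4 * F + 2) * ((4 * q' - 1) * deriv a 1 ^ 2) :=
      mul_nonneg hexp0.le (mul_nonneg (by linarith) (sq_nonneg _))
    have e2 : 0 ≤ Real.exp (4 * F + 2) * ((4 * q' - 1) * c 1 ^ 2) :=
      mul_nonneg hexp0.le (mul_nonneg (by linarith) (sq_nonneg _))
    have e3 : 0 ≤ Real.exp (4 * F + 2) * ((4 * q' - 1) * (lam ^ 2 * a 1 ^ 2)) :=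
      mul_nonneg hexp0.le (mul_nonneg (by linarith) (mul_nonneg (sq_nonneg _) (sq_nonneg _)))
    nlinarith [e1, e2, e3]
  calc Ef q' lam a c t ≤ V t := h1
    _ ≤ V 1 := hVle
    _ ≤ _ := h2



/-- Non-sharp backward growth estimates (single-mode version of Proposition 3.12
of the paper). -/
theorem nonsharp_backward_estimates (q' F : ℝ) (hq : 1 ≤ q') (hF : 0 ≤ F) :
    ∃ C > 0, ∀ f₁ f₂ f₃ : ℝ → ℝ,
      ContinuousOn f₁ (Ici 0) → ContinuousOn f₂ (Ici 0) → ContinuousOn f₃ (Ici 0) →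
      (∀ τ ≥ (0:ℝ), |f₁ τ| ≤ F) → (∀ τ ≥ (0:ℝ), |f₂ τ| ≤ F) → (∀ τ ≥ (0:ℝ), |f₃ τ| ≤ F) →
      ∀ lam : ℝ, 0 ≤ lam →
      ∀ a c : ℝ → ℝ,
      SolvesModelSystem q' f₁ f₂ f₃ lam a c (Ioc 0 1) →
      ∀ τ ∈ Ioc (0:ℝ) 1,
        (a τ ^ 2 ≤ C * (1 + Real.log τ ^ 2)
            * ((1 + lam ^ 2) * a 1 ^ 2 + deriv a 1 ^ 2 + c 1 ^ 2)) ∧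
        ((τ * deriv a τ) ^ 2
            ≤ C * ((1 + lam ^ 2) * a 1 ^ 2 + deriv a 1 ^ 2 + c 1 ^ 2)) := by
  have hq0 : (0:ℝ) < q' := lt_of_lt_of_le one_pos hq
  set K : ℝ := 4 * q' * Real.exp (4 * F + 2) with hKdef
  have hK0 : (0:ℝ) < K := by positivity
  refine ⟨2 + 2 * K, by linarith, ?_⟩
  intro f₁ f₂ f₃ _hc1 _hc2 _hc3 hf₁ hf₂ hf₃ lam hlam a c hsol t ht
  obtain ⟨ht0, ht1⟩ := ht
  have hda : ∀ τ ∈ Ioc (0:ℝ) 1, DifferentiableAt ℝ a τ := fun τ hτ => (hsol τ hτ).1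
  have hda' : ∀ τ ∈ Ioc (0:ℝ) 1, DifferentiableAt ℝ (deriv a) τ := fun τ hτ => (hsol τ hτ).2.1
  have hdc : ∀ τ ∈ Ioc (0:ℝ) 1, DifferentiableAt ℝ c τ := fun τ hτ => (hsol τ hτ).2.2.1
  have hode : ∀ τ ∈ Ioc (0:ℝ) 1,
      deriv (deriv a) τ + τ⁻¹ * deriv a τ + 4 * q' * a τ
        + 4 * lam ^ 2 * ((τ ^ 2 + 1) ^ 2)⁻¹ * a τ
      = f₁ τ * τ * deriv a τ + f₂ τ * τ ^ 2 * a τ + f₃ τ * c τ := fun τ hτ => (hsol τ hτ).2.2.2.1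
  have hcode : ∀ τ ∈ Ioc (0:ℝ) 1, deriv c τ = 2 * τ * a τ := fun τ hτ => (hsol τ hτ).2.2.2.2
  set D : ℝ := (1 + lam ^ 2) * a 1 ^ 2 + deriv a 1 ^ 2 + c 1 ^ 2 with hDdef
  have hD0 : (0:ℝ) ≤ D := by positivity
  -- uniform energy bound
  have hEb : ∀ s ∈ Ioc (0:ℝ) 1, (s * deriv a s) ^ 2 ≤ K * D := by
    intro s hs
    have h1 := Ef_bound q' F hq hF f₁ f₂ f₃ hf₁ hf₂ hf₃ lam a c hda hda' hdc hode hcode s hs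
    have h2 : (s * deriv a s) ^ 2 ≤ Ef q' lam a c s := by
      rw [Ef_def]
      have p1 : 0 ≤ 4 * q' * s ^ 2 * (a s) ^ 2 := by positivity
      have p2 : 0 ≤ 4 * lam ^ 2 * (s ^ 2 / (s ^ 2 + 1) ^ 2) * (a s) ^ 2 := by positivity
      nlinarith [sq_nonneg (c s)]
    calc (s * deriv a s) ^ 2 ≤ Ef q' lam a c s := h2
      _ ≤ K * D := h1
  constructor
  · -- part (i)
    set B : ℝ := Real.sqrt (K * D) with hBdef
    have hB0 : 0 ≤ B := Real.sqrt_nonneg _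
    have hB2 : B ^ 2 = K * D := Real.sq_sqrt (by positivity)
    have hsub : Icc t 1 ⊆ Ioc (0:ℝ) 1 := fun x hx => ⟨lt_of_lt_of_le ht0 hx.1, hx.2⟩
    have hbd : ∀ s ∈ Icc t 1, |deriv a s| ≤ B * s⁻¹ := by
      intro s hs
      have hs0 : 0 < s := lt_of_lt_of_le ht0 hs.1
      have h1 := hEb s (hsub hs)
      have h2 : |s * deriv a s| ≤ B := by
        have := Real.sqrt_le_sqrt h1
        rwa [Real.sqrt_sq_eq_abs, ← hBdef] at this
      rw [abs_mul, abs_of_pos hs0] at h2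
      rw [← div_eq_mul_inv, le_div_iff₀ hs0]
      nlinarith [h2]
    have hcont : ContinuousOn (deriv a) (Icc t 1) := by
      intro x hx
      exact ((hda' x (hsub hx)).continuousAt).continuousWithinAt
    have hint : IntervalIntegrable (deriv a) MeasureTheory.volume t 1 := by
      apply ContinuousOn.intervalIntegrable
      rwa [uIcc_of_le ht1]
    have hftc : ∫ y in t..1, deriv a y = a 1 - a t := by
      apply intervalIntegral.integral_deriv_eq_sub
      · intro x hx
        rw [uIcc_of_le ht1] at hx
        exact hda x (hsub hx)
      · exact hint
    have habs : |∫ y in t..1, deriv a y| ≤ ∫ y in t..1, |deriv a y| :=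
      intervalIntegral.abs_integral_le_integral_abs ht1
    have hint2 : IntervalIntegrable (fun s => B * s⁻¹) MeasureTheory.volume t 1 := by
      apply ContinuousOn.intervalIntegrable
      rw [uIcc_of_le ht1]
      exact (continuousOn_inv₀.mono (fun x hx => ne_of_gt (lt_of_lt_of_le ht0 hx.1))).const_smul B
    have hmono2 : ∫ y in t..1, |deriv a y| ≤ ∫ y in t..1, B * y⁻¹ :=
      intervalIntegral.integral_mono_on ht1 hint.abs hint2 hbd
    have hinv : ∫ y in t..1, B * y⁻¹ = B * (-Real.log t) := by
      rw [intervalIntegral.integral_const_mul, integral_inv]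
      · rw [one_div, Real.log_inv]
      · rw [uIcc_of_le ht1]
        intro h
        simp only [mem_Icc] at h
        linarith [h.1]
    have hlogt : Real.log t ≤ 0 := Real.log_nonpos ht0.le ht1
    have hat : |a t| ≤ |a 1| + B * (-Real.log t) := by
      have h4 : |a 1 - a t| ≤ B * (-Real.log t) := by
        rw [← hftc]; calc |∫ y in t..1, deriv a y| ≤ ∫ y in t..1, |deriv a y| := habs
          _ ≤ ∫ y in t..1, B * y⁻¹ := hmono2
          _ = B * (-Real.log t) := hinv
      calc |a t| = |a 1 - (a 1 - a t)| := by ring_nf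
        _ ≤ |a 1| + |a 1 - a t| := abs_sub (a 1) (a 1 - a t)
        _ ≤ |a 1| + B * (-Real.log t) := by linarith
    have ha1D : a 1 ^ 2 ≤ D := by rw [hDdef]; nlinarith [sq_nonneg (lam * a 1), sq_nonneg (deriv a 1), sq_nonneg (c 1), mul_nonneg (sq_nonneg lam) (sq_nonneg (a 1))]
    have hsq : a t ^ 2 ≤ 2 * a 1 ^ 2 + 2 * B ^ 2 * Real.log t ^ 2 := by
      have h5 : a t ^ 2 = |a t| ^ 2 := (sq_abs _).symm
      have h6 : |a t| ^ 2 ≤ (|a 1| + B * (-Real.log t)) ^ 2 := by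
        apply pow_le_pow_left₀ (abs_nonneg _) hat
      have h7 : (|a 1| + B * (-Real.log t)) ^ 2 ≤ 2 * |a 1| ^ 2 + 2 * (B * Real.log t) ^ 2 := by
        nlinarith [sq_nonneg (|a 1| - B * (-Real.log t))]
      rw [h5]
      calc |a t| ^ 2 ≤ (|a 1| + B * (-Real.log t)) ^ 2 := h6
        _ ≤ 2 * |a 1| ^ 2 + 2 * (B * Real.log t) ^ 2 := h7
        _ = 2 * a 1 ^ 2 + 2 * B ^ 2 * Real.log t ^ 2 := by rw [sq_abs]; ring
    have hL : 0 ≤ Real.log t ^ 2 := sq_nonneg _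
    calc a t ^ 2 ≤ 2 * a 1 ^ 2 + 2 * B ^ 2 * Real.log t ^ 2 := hsq
      _ = 2 * a 1 ^ 2 + 2 * (K * D) * Real.log t ^ 2 := by rw [hB2]
      _ ≤ (2 + 2 * K) * (1 + Real.log t ^ 2) * D := by
          nlinarith [mul_nonneg hD0 hL, mul_nonneg (mul_nonneg hK0.le hD0) hL, ha1D, mul_nonneg hK0.le hD0]
  · -- part (ii)
    calc (t * deriv a t) ^ 2 ≤ K * D := hEb t ⟨ht0, ht1⟩
      _ ≤ (2 + 2 * K) * D := by nlinarith [hD0, hK0.le]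
end

section
/- Asymptotic completeness for the model system, single-mode version (Proposition 3.13 of the paper): let λ ≥ 0 and let (a, c) solve the mode-λ model system on the interval (0, 1], with a twice continuously differentiable and c continuously differentiable on (0,1]. Then c extends continuously to τ = 0 and there exist real numbers O, h and a constant K ≥ 0 such that |a(τ) − O·log τ − h| ≤ K·τ²·(1 + (log τ)²) and |a'(τ) − O/τ| ≤ K·τ·(1 + (log τ)²) for all τ ∈ (0, 1]; that is, (a, c) has asymptotic data (c(0), O, h) at τ = 0. -/
open Set Filter
open MeasureTheory intervalIntegral

noncomputable def phiAux (s : ℝ) : ℝ := s - s * Real.log s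
noncomputable def PhiAux (t : ℝ) : ℝ := 3/4 * t^2 - t^2/2 * Real.log t

lemma phiAux_eq : phiAux = fun s => s + Real.negMulLog s := by
  funext s; simp [phiAux, Real.negMulLog]; ring

lemma phiAux_cont : Continuous phiAux := by
  rw [phiAux_eq]; exact continuous_id.add Real.continuous_negMulLog

lemma phiAux_nonneg {s : ℝ} (h0 : 0 ≤ s) (h1 : s ≤ 1) : 0 ≤ phiAux s := by
  have hl : Real.log s ≤ 0 := Real.log_nonpos h0 h1
  have h2 : 0 ≤ s * (1 - Real.log s) := mul_nonneg h0 (by linarith)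
  calc (0:ℝ) ≤ s * (1 - Real.log s) := h2
    _ = phiAux s := by simp [phiAux]; ring

lemma hasDerivAt_PhiAux {x : ℝ} (hx : 0 ≤ x) : HasDerivAt PhiAux (phiAux x) x := by
  rcases eq_or_lt_of_le hx with rfl | hx
  · rw [hasDerivAt_iff_tendsto_slope]
    have hc : Continuous (fun s : ℝ => 3/4*s + (1/2)*Real.negMulLog s) :=
      (continuous_const.mul continuous_id).add (continuous_const.mul Real.continuous_negMulLog)
    have hρ : Tendsto (fun s => 3/4*s + (1/2)*Real.negMulLog s)
        (nhdsWithin 0 {(0:ℝ)}ᶜ) (nhds (0:ℝ)) := by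
      have := (hc.tendsto 0).mono_left (nhdsWithin_le_nhds (s := {(0:ℝ)}ᶜ))
      simpa [Real.negMulLog] using this
    have hev : (fun s => 3/4*s + (1/2)*Real.negMulLog s) =ᶠ[nhdsWithin 0 {(0:ℝ)}ᶜ] slope PhiAux 0 := by
      filter_upwards [self_mem_nhdsWithin] with s hs
      have hs' : (s:ℝ) ≠ 0 := hs
      simp only [slope_def_field, PhiAux, Real.negMulLog]
      field_simp
      ring
    have h0 : phiAux 0 = 0 := by simp [phiAux]
    rw [h0]
    exact hρ.congr' hev
  · have h1 : HasDerivAt (fun t : ℝ => 3/4 * t^2) (3/2 * x) x := by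
      simpa using ((hasDerivAt_pow 2 x).const_mul (3/4 : ℝ)).congr_deriv (by ring)
    have ha : HasDerivAt (fun t : ℝ => t^2/2) x x := by
      simpa using ((hasDerivAt_pow 2 x).div_const 2).congr_deriv (by ring)
    have h2 : HasDerivAt (fun t : ℝ => t^2/2 * Real.log t) (x * Real.log x + x/2) x := by
      have := ha.mul (Real.hasDerivAt_log hx.ne')
      apply this.congr_deriv
      field_simp
    exact (h1.sub h2).congr_deriv (by simp [phiAux]; ring)

lemma integral_phiAux {t : ℝ} (ht : 0 ≤ t) :
    ∫ s in Ioc (0:ℝ) t, phiAux s = PhiAux t := by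
  have h := integral_eq_sub_of_hasDerivAt (f := PhiAux) (f' := phiAux) (a := 0) (b := t)
    (fun x hx => by
      rw [uIcc_of_le ht] at hx
      exact hasDerivAt_PhiAux hx.1)
    (phiAux_cont.intervalIntegrable 0 t)
  rw [integral_of_le ht] at h
  rw [h]
  simp [PhiAux]

lemma gronwall_backward {V : ℝ → ℝ} {A B : ℝ} (hA : 0 ≤ A) (hB : 0 ≤ B)
    (hV : ∀ τ ∈ Ioc (0:ℝ) 1, ContinuousAt V τ)
    (h : ∀ τ ∈ Ioc (0:ℝ) 1, V τ ≤ A + B * ∫ s in τ..1, V s) :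
    ∀ τ ∈ Ioc (0:ℝ) 1, V τ ≤ A * Real.exp B := by
  intro τ₀ hτ₀
  obtain ⟨h0, h1⟩ := hτ₀
  have hVop : ContinuousOn V (Ioo (0:ℝ) 1) := fun y hy =>
    (hV y ⟨hy.1, hy.2.le⟩).continuousWithinAt
  have hVint : ∀ x, 0 < x → x ≤ 1 → IntervalIntegrable V volume x 1 := by
    intro x hx hx1
    apply ContinuousOn.intervalIntegrable
    intro y hy
    rw [uIcc_of_le hx1] at hy
    exact (hV y ⟨lt_of_lt_of_le hx hy.1, hy.2⟩).continuousWithinAt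
  set ψ : ℝ → ℝ := fun τ => (A + B * ∫ s in τ..1, V s) * Real.exp (B * τ) with hψdef
  have hIcont : ContinuousOn (fun τ => ∫ s in τ..1, V s) (Icc τ₀ 1) := by
    have hint : IntegrableOn V (uIcc τ₀ 1) volume := by
      rw [uIcc_of_le h1]
      apply ContinuousOn.integrableOn_Icc
      intro y hy
      exact (hV y ⟨lt_of_lt_of_le h0 hy.1, hy.2⟩).continuousWithinAt
    have := continuousOn_primitive_interval_left hint
    rwa [uIcc_of_le h1] at this
  have hψcont : ContinuousOn ψ (Icc τ₀ 1) :=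
    ((continuousOn_const.add (continuousOn_const.mul hIcont)).mul
      ((Real.continuous_exp.comp (continuous_const.mul continuous_id)).continuousOn))
  have hψderiv : ∀ x ∈ Ioo τ₀ 1, HasDerivAt ψ
      (B * Real.exp (B*x) * ((A + B * ∫ s in x..1, V s) - V x)) x := by
    intro x hx
    have hx0 : 0 < x := lt_trans h0 hx.1
    have hxIoo : x ∈ Ioo (0:ℝ) 1 := ⟨hx0, hx.2⟩
    have hI : HasDerivAt (fun τ => ∫ s in τ..1, V s) (-V x) x :=
      integral_hasDerivAt_left (hVint x hx0 hx.2.le)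
        (hVop.stronglyMeasurableAtFilter isOpen_Ioo x hxIoo)
        (hV x ⟨hx0, hx.2.le⟩)
    have hE : HasDerivAt (fun τ : ℝ => Real.exp (B * τ)) (B * Real.exp (B * x)) x := by
      exact ((Real.hasDerivAt_exp (B*x)).comp x ((hasDerivAt_id x).const_mul B)).congr_deriv
        (by simp only [mul_one, id]; ring)
    have := ((hasDerivAt_const x A).add (hI.const_mul B)).mul hE
    apply this.congr_deriv
    simp only [Pi.add_apply]
    ring
  have hmono : MonotoneOn ψ (Icc τ₀ 1) := by
    apply monotoneOn_of_deriv_nonneg (convex_Icc τ₀ 1) hψcont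
    · intro x hx
      rw [interior_Icc] at hx
      exact (hψderiv x hx).differentiableAt.differentiableWithinAt
    · intro x hx
      rw [interior_Icc] at hx
      rw [(hψderiv x hx).deriv]
      have hx0 : 0 < x := lt_trans h0 hx.1
      have hVx := h x ⟨hx0, hx.2.le⟩
      have hexp : 0 ≤ Real.exp (B*x) := (Real.exp_pos _).le
      have hd : 0 ≤ (A + B * ∫ s in x..1, V s) - V x := by linarith
      exact mul_nonneg (mul_nonneg hB hexp) hd
  have hψ1 : ψ 1 = A * Real.exp B := by
    simp [hψdef]
  have key : ψ τ₀ ≤ A * Real.exp B := by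
    rw [← hψ1]
    exact hmono ⟨le_refl _, h1⟩ ⟨h1, le_refl _⟩ h1
  have hτ₀mem : V τ₀ ≤ A + B * ∫ s in τ₀..1, V s := h τ₀ ⟨h0, h1⟩
  have hexp_pos : 0 < Real.exp (B * τ₀) := Real.exp_pos _
  have hexp_ge : 1 ≤ Real.exp (B * τ₀) := Real.one_le_exp (by positivity)
  rcases le_or_gt 0 (A + B * ∫ s in τ₀..1, V s) with hAB | hAB
  · calc V τ₀ ≤ A + B * ∫ s in τ₀..1, V s := hτ₀mem
      _ ≤ (A + B * ∫ s in τ₀..1, V s) * Real.exp (B * τ₀) := by nlinarith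
      _ = ψ τ₀ := rfl
      _ ≤ A * Real.exp B := key
  · have : V τ₀ < 0 := lt_of_le_of_lt hτ₀mem hAB
    have : 0 ≤ A * Real.exp B := mul_nonneg hA (Real.exp_pos _).le
    linarith

lemma PhiAux_nonneg {t : ℝ} (h0 : 0 ≤ t) (h1 : t ≤ 1) : 0 ≤ PhiAux t := by
  have hl : Real.log t ≤ 0 := Real.log_nonpos h0 h1
  simp only [PhiAux]
  nlinarith [sq_nonneg t]

lemma PhiAux_le {t : ℝ} (h0 : 0 ≤ t) (h1 : t ≤ 1) :
    PhiAux t ≤ 5/4 * (t^2 * (1 + Real.log t ^ 2)) := by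
  have hl : Real.log t ≤ 0 := Real.log_nonpos h0 h1
  simp only [PhiAux]
  nlinarith [mul_nonneg (sq_nonneg t) (sq_nonneg (Real.log t + 1/5))]

lemma PhiAux_le_mul {t : ℝ} (h0 : 0 ≤ t) (h1 : t ≤ 1) : PhiAux t ≤ t * phiAux t := by
  have hl : Real.log t ≤ 0 := Real.log_nonpos h0 h1
  simp only [PhiAux, phiAux]
  nlinarith [sq_nonneg t, mul_nonneg (sq_nonneg t) (neg_nonneg.2 hl)]

lemma tail_decomp {g : ℝ → ℝ} {Cg : ℝ} (hCg : 0 ≤ Cg)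
    (hgC : ∀ s ∈ Ioc (0:ℝ) 1, ContinuousAt g s)
    (hgb : ∀ s ∈ Ioc (0:ℝ) 1, |g s| ≤ Cg * phiAux s) :
    ∀ τ ∈ Ioc (0:ℝ) 1,
      |(∫ s in Ioc (0:ℝ) 1, g s) - ∫ s in τ..1, g s| ≤ Cg * PhiAux τ := by
  have hcont : ContinuousOn g (Ioc (0:ℝ) 1) := fun s hs => (hgC s hs).continuousWithinAt
  have hφint : IntegrableOn (fun s => Cg * phiAux s) (Ioc (0:ℝ) 1) volume :=
    (continuous_const.mul phiAux_cont).integrableOn_Ioc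
  have hgint : IntegrableOn g (Ioc (0:ℝ) 1) volume := by
    apply Integrable.mono' hφint (hcont.aestronglyMeasurable measurableSet_Ioc)
    rw [ae_restrict_iff' measurableSet_Ioc]
    exact ae_of_all _ (fun s hs => by simpa [Real.norm_eq_abs] using hgb s hs)
  intro τ hτ
  have hτ0 := hτ.1
  have hτ1 := hτ.2
  have hsub1 : Ioc (0:ℝ) τ ⊆ Ioc (0:ℝ) 1 := Ioc_subset_Ioc_right hτ1
  have hsub2 : Ioc τ (1:ℝ) ⊆ Ioc (0:ℝ) 1 := Ioc_subset_Ioc_left hτ0.le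
  have hunion : Ioc (0:ℝ) τ ∪ Ioc τ 1 = Ioc (0:ℝ) 1 := Ioc_union_Ioc_eq_Ioc hτ0.le hτ1
  have hsplit : ∫ s in Ioc (0:ℝ) 1, g s
      = (∫ s in Ioc (0:ℝ) τ, g s) + ∫ s in Ioc τ 1, g s := by
    rw [← hunion]
    exact setIntegral_union (Ioc_disjoint_Ioc_of_le le_rfl) measurableSet_Ioc
      (hgint.mono_set hsub1) (hgint.mono_set hsub2)
  have hIoc : (∫ s in τ..1, g s) = ∫ s in Ioc τ 1, g s :=
    intervalIntegral.integral_of_le hτ1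
  rw [hIoc, hsplit]
  have he : (∫ s in Ioc (0:ℝ) τ, g s) + (∫ s in Ioc τ 1, g s) - (∫ s in Ioc τ 1, g s)
      = ∫ s in Ioc (0:ℝ) τ, g s := by ring
  rw [he]
  calc |∫ s in Ioc (0:ℝ) τ, g s| ≤ ∫ s in Ioc (0:ℝ) τ, |g s| := by
        simpa [Real.norm_eq_abs] using
          MeasureTheory.norm_integral_le_integral_norm (μ := volume.restrict (Ioc (0:ℝ) τ)) g
    _ ≤ ∫ s in Ioc (0:ℝ) τ, Cg * phiAux s := by
        apply setIntegral_mono_on ((hgint.mono_set hsub1).abs) (hφint.mono_set hsub1)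
          measurableSet_Ioc
        exact fun s hs => hgb s (hsub1 hs)
    _ = Cg * ∫ s in Ioc (0:ℝ) τ, phiAux s := integral_const_mul _ _
    _ = Cg * PhiAux τ := by rw [integral_phiAux hτ0.le]



set_option maxHeartbeats 2000000 in
/-- Asymptotic completeness for the model system (single-mode version of
Proposition 3.13 of the paper). -/
theorem asymptotic_completeness_model (q' F : ℝ) (hq : 1 ≤ q') (hF : 0 ≤ F)
    (f₁ f₂ f₃ : ℝ → ℝ)
    (hf₁c : ContinuousOn f₁ (Ici 0)) (hf₂c : ContinuousOn f₂ (Ici 0))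
    (hf₃c : ContinuousOn f₃ (Ici 0))
    (hf₁ : ∀ τ ≥ (0:ℝ), |f₁ τ| ≤ F) (hf₂ : ∀ τ ≥ (0:ℝ), |f₂ τ| ≤ F)
    (hf₃ : ∀ τ ≥ (0:ℝ), |f₃ τ| ≤ F)
    (lam : ℝ) (hlam : 0 ≤ lam)
    (a c : ℝ → ℝ)
    (hsol : SolvesModelSystem q' f₁ f₂ f₃ lam a c (Ioc 0 1))
    (ha : ContinuousOn (deriv (deriv a)) (Ioc 0 1))
    (hc : ContinuousOn (deriv c) (Ioc 0 1)) :
    ∃ c₀ : ℝ, Tendsto c (nhdsWithin 0 (Ioi 0)) (nhds c₀) ∧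
      ∃ O h K : ℝ, 0 ≤ K ∧ ∀ τ ∈ Ioc (0:ℝ) 1,
        |a τ - O * Real.log τ - h| ≤ K * τ ^ 2 * (1 + Real.log τ ^ 2) ∧
        |deriv a τ - O / τ| ≤ K * τ * (1 + Real.log τ ^ 2) := by
  have hda : ∀ s ∈ Ioc (0:ℝ) 1, DifferentiableAt ℝ a s := fun s hs => (hsol s hs).1
  have hdda : ∀ s ∈ Ioc (0:ℝ) 1, DifferentiableAt ℝ (deriv a) s := fun s hs => (hsol s hs).2.1
  have hdc : ∀ s ∈ Ioc (0:ℝ) 1, DifferentiableAt ℝ c s := fun s hs => (hsol s hs).2.2.1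
  have heq : ∀ s ∈ Ioc (0:ℝ) 1, deriv (deriv a) s + s⁻¹ * deriv a s + 4 * q' * a s
        + 4 * lam ^ 2 * ((s ^ 2 + 1) ^ 2)⁻¹ * a s
      = f₁ s * s * deriv a s + f₂ s * s ^ 2 * a s + f₃ s * c s :=
    fun s hs => (hsol s hs).2.2.2.1
  have hceq : ∀ s ∈ Ioc (0:ℝ) 1, deriv c s = 2 * s * a s := fun s hs => (hsol s hs).2.2.2.2
  set w : ℝ → ℝ := fun s => s * deriv a s with hwdef
  set G : ℝ → ℝ := fun s => f₁ s * s * deriv a s + f₂ s * s^2 * a s + f₃ s * c s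
      - 4*q'* a s - 4*lam^2 * ((s^2+1)^2)⁻¹ * a s with hGdef
  -- continuity facts
  have haC : ∀ s ∈ Ioc (0:ℝ) 1, ContinuousAt a s := fun s hs => (hda s hs).continuousAt
  have hdaC : ∀ s ∈ Ioc (0:ℝ) 1, ContinuousAt (deriv a) s := fun s hs => (hdda s hs).continuousAt
  have hcC : ∀ s ∈ Ioc (0:ℝ) 1, ContinuousAt c s := fun s hs => (hdc s hs).continuousAt
  have hf₁C : ∀ s ∈ Ioc (0:ℝ) 1, ContinuousAt f₁ s := fun s hs =>
    hf₁c.continuousAt (Ici_mem_nhds hs.1)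
  have hf₂C : ∀ s ∈ Ioc (0:ℝ) 1, ContinuousAt f₂ s := fun s hs =>
    hf₂c.continuousAt (Ici_mem_nhds hs.1)
  have hf₃C : ∀ s ∈ Ioc (0:ℝ) 1, ContinuousAt f₃ s := fun s hs =>
    hf₃c.continuousAt (Ici_mem_nhds hs.1)
  have hwC : ∀ s ∈ Ioc (0:ℝ) 1, ContinuousAt w s := fun s hs =>
    continuousAt_id.mul (hdaC s hs)
  have hGC : ∀ s ∈ Ioc (0:ℝ) 1, ContinuousAt G s := by
    intro s hs
    have hinv : ContinuousAt (fun s : ℝ => ((s^2+1)^2)⁻¹) s := by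
      apply ContinuousAt.inv₀ (by fun_prop) (by positivity)
    exact (((((hf₁C s hs).mul continuousAt_id).mul (hdaC s hs)).add
        (((hf₂C s hs).mul (continuousAt_pow _ _)).mul (haC s hs))).add
        ((hf₃C s hs).mul (hcC s hs))).sub
        ((continuousAt_const.mul (haC s hs)))|>.sub
        ((continuousAt_const.mul hinv).mul (haC s hs))
  -- derivative of w
  have hwD : ∀ s ∈ Ioc (0:ℝ) 1, HasDerivAt w (s * G s) s := by
    intro s hs
    have hs0 : s ≠ 0 := ne_of_gt hs.1
    have h1 : HasDerivAt w (1 * deriv a s + s * deriv (deriv a) s) s :=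
      (hasDerivAt_id s).mul (hdda s hs).hasDerivAt
    apply h1.congr_deriv
    have key := heq s hs
    have hss : s * s⁻¹ = 1 := mul_inv_cancel₀ hs0
    simp only [hGdef]
    linear_combination s * key - deriv a s * hss
  set C₁ : ℝ := F + 4*q' + 4*lam^2 with hC₁def
  have hC₁ : 0 ≤ C₁ := by nlinarith [sq_nonneg lam]
  have hFC₁ : F ≤ C₁ := by nlinarith [sq_nonneg lam]
  -- pointwise bound on |s * G s|
  have hsGabs : ∀ s ∈ Ioc (0:ℝ) 1, |s * G s| ≤
      F * (s * |w s|) + C₁ * (s * |a s|) + F * (s * |c s|) := by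
    intro s hs
    have hs0 : 0 < s := hs.1
    have hs1 : s ≤ 1 := hs.2
    have hb1 : |f₁ s| ≤ F := hf₁ s hs0.le
    have hb2 : |f₂ s| ≤ F := hf₂ s hs0.le
    have hb3 : |f₃ s| ≤ F := hf₃ s hs0.le
    have hinv1 : ((s^2+1)^2)⁻¹ ≤ 1 := by
      rw [inv_le_one_iff₀]
      right; nlinarith
    have hinv0 : 0 < ((s^2+1)^2)⁻¹ := by positivity
    have htri : |G s| ≤ |f₁ s * s * deriv a s| + |f₂ s * s^2 * a s| + |f₃ s * c s|
        + |4*q'* a s| + |4*lam^2 * ((s^2+1)^2)⁻¹ * a s| := by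
      simp only [hGdef]
      calc |f₁ s * s * deriv a s + f₂ s * s^2 * a s + f₃ s * c s
            - 4*q'* a s - 4*lam^2 * ((s^2+1)^2)⁻¹ * a s|
          ≤ |f₁ s * s * deriv a s + f₂ s * s^2 * a s + f₃ s * c s
            - 4*q'* a s| + |4*lam^2 * ((s^2+1)^2)⁻¹ * a s| := abs_sub _ _
        _ ≤ (|f₁ s * s * deriv a s + f₂ s * s^2 * a s + f₃ s * c s|
            + |4*q'* a s|) + |4*lam^2 * ((s^2+1)^2)⁻¹ * a s| := by
              gcongr; exact abs_sub _ _
        _ ≤ ((|f₁ s * s * deriv a s + f₂ s * s^2 * a s| + |f₃ s * c s|)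
            + |4*q'* a s|) + |4*lam^2 * ((s^2+1)^2)⁻¹ * a s| := by
              gcongr; exact abs_add_le _ _
        _ ≤ (((|f₁ s * s * deriv a s| + |f₂ s * s^2 * a s|) + |f₃ s * c s|)
            + |4*q'* a s|) + |4*lam^2 * ((s^2+1)^2)⁻¹ * a s| := by
              gcongr; exact abs_add_le _ _
        _ = _ := by ring
    have e1 : |f₁ s * s * deriv a s| = |f₁ s| * |w s| := by
      simp only [hwdef]
      rw [mul_assoc, abs_mul, abs_mul, abs_of_pos hs0]
    have e2 : |f₂ s * s^2 * a s| = |f₂ s| * s^2 * |a s| := by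
      rw [abs_mul, abs_mul, abs_pow, abs_of_pos hs0]
    have e3 : |f₃ s * c s| = |f₃ s| * |c s| := abs_mul _ _
    have e4 : |4*q'* a s| = 4*q'*|a s| := by
      rw [abs_mul, abs_of_nonneg (by linarith : (0:ℝ) ≤ 4*q')]
    have e5 : |4*lam^2 * ((s^2+1)^2)⁻¹ * a s| = 4*lam^2 * ((s^2+1)^2)⁻¹ * |a s| := by
      rw [abs_mul, abs_of_nonneg (by positivity : (0:ℝ) ≤ 4*lam^2 * ((s^2+1)^2)⁻¹)]
    rw [abs_mul, abs_of_pos hs0]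
    rw [e1, e2, e3, e4, e5] at htri
    have hw0 : 0 ≤ |w s| := abs_nonneg _
    have ha0 : 0 ≤ |a s| := abs_nonneg _
    have hc0 : 0 ≤ |c s| := abs_nonneg _
    have hs2 : s^2 ≤ 1 := by nlinarith
    have hlam2 : 4*lam^2 * ((s^2+1)^2)⁻¹ ≤ 4*lam^2 := by nlinarith [sq_nonneg lam]
    have h1 : |f₁ s| * |w s| ≤ F * |w s| := mul_le_mul_of_nonneg_right hb1 hw0
    have h2 : |f₂ s| * s^2 * |a s| ≤ F * |a s| := by
      have := mul_le_mul (mul_le_mul hb2 hs2 (sq_nonneg s) hF) le_rfl ha0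
        (by positivity : (0:ℝ) ≤ F*1)
      simpa using this
    have h3 : |f₃ s| * |c s| ≤ F * |c s| := mul_le_mul_of_nonneg_right hb3 hc0
    have hGb : |G s| ≤ F * |w s| + C₁ * |a s| + F * |c s| := by
      rw [hC₁def]
      nlinarith [htri]
    nlinarith [mul_le_mul_of_nonneg_left hGb hs0.le, abs_nonneg (G s)]
  -- interval integrability helpers
  have hsub : ∀ {τ : ℝ}, τ ∈ Ioc (0:ℝ) 1 → Icc τ 1 ⊆ Ioc (0:ℝ) 1 := by
    intro τ hτ y hy
    exact ⟨lt_of_lt_of_le hτ.1 hy.1, hy.2⟩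
  have hCInt : ∀ {g : ℝ → ℝ}, (∀ s ∈ Ioc (0:ℝ) 1, ContinuousAt g s) →
      ∀ {τ : ℝ}, τ ∈ Ioc (0:ℝ) 1 → IntervalIntegrable g volume τ 1 := by
    intro g hg τ hτ
    apply ContinuousOn.intervalIntegrable
    rw [uIcc_of_le hτ.2]
    exact fun y hy => (hg y (hsub hτ hy)).continuousWithinAt
  -- FTC identities
  have hwFTC : ∀ τ ∈ Ioc (0:ℝ) 1, ∫ s in τ..1, s * G s = w 1 - w τ := by
    intro τ hτ
    apply integral_eq_sub_of_hasDerivAt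
    · intro x hx
      rw [uIcc_of_le hτ.2] at hx
      exact hwD x (hsub hτ hx)
    · exact hCInt (fun s hs => continuousAt_id.mul (hGC s hs)) hτ
  have haFTC : ∀ τ ∈ Ioc (0:ℝ) 1, ∫ s in τ..1, deriv a s = a 1 - a τ := by
    intro τ hτ
    apply integral_eq_sub_of_hasDerivAt
    · intro x hx
      rw [uIcc_of_le hτ.2] at hx
      exact (hda x (hsub hτ hx)).hasDerivAt
    · exact hCInt hdaC hτ
  have hcFTC : ∀ τ ∈ Ioc (0:ℝ) 1, ∫ s in τ..1, 2*s*a s = c 1 - c τ := by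
    intro τ hτ
    apply integral_eq_sub_of_hasDerivAt
    · intro x hx
      rw [uIcc_of_le hτ.2] at hx
      exact ((hdc x (hsub hτ hx)).hasDerivAt).congr_deriv (hceq x (hsub hτ hx))
    · exact hCInt (fun s hs => (continuousAt_const.mul continuousAt_id).mul (haC s hs)) hτ
  -- the Gronwall functional
  set V : ℝ → ℝ := fun s => |w s| + s * |a s| + s * |c s| with hVdef
  have hVC : ∀ s ∈ Ioc (0:ℝ) 1, ContinuousAt V s := fun s hs =>
    ((hwC s hs).abs.add (continuousAt_id.mul (haC s hs).abs)).add
      (continuousAt_id.mul (hcC s hs).abs)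
  have hVnn : ∀ s ∈ Ioc (0:ℝ) 1, 0 ≤ V s := by
    intro s hs
    have := abs_nonneg (w s); have := abs_nonneg (a s); have := abs_nonneg (c s)
    have hs0 := hs.1
    simp only [hVdef]
    positivity
  set A0 : ℝ := |w 1| + |a 1| + |c 1| with hA0def
  set B0 : ℝ := C₁ + 3 with hB0def
  have hA0 : 0 ≤ A0 := by positivity
  have hB0 : 0 ≤ B0 := by simp only [hB0def]; linarith
  have hVineq : ∀ τ ∈ Ioc (0:ℝ) 1, V τ ≤ A0 + B0 * ∫ s in τ..1, V s := by
    intro τ hτ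
    have hτ0 := hτ.1
    have hτ1 := hτ.2
    have hVint : IntervalIntegrable V volume τ 1 := hCInt hVC hτ
    have hintVnn : 0 ≤ ∫ s in τ..1, V s :=
      intervalIntegral.integral_nonneg hτ1 (fun x hx => hVnn x (hsub hτ hx))
    -- (1) bound |w τ|
    have h1 : |w τ| ≤ |w 1| + C₁ * ∫ s in τ..1, V s := by
      have e := hwFTC τ hτ
      have habs : |∫ s in τ..1, s * G s| ≤ ∫ s in τ..1, |s * G s| :=
        intervalIntegral.abs_integral_le_integral_abs hτ1
      have hmono : (∫ s in τ..1, |s * G s|) ≤ ∫ s in τ..1, C₁ * V s := by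
        apply intervalIntegral.integral_mono_on hτ1
        · exact (hCInt (fun s hs => (continuousAt_id.mul (hGC s hs)).abs) hτ)
        · exact hVint.const_mul _
        · intro x hx
          have hxm := hsub hτ hx
          have hsg := hsGabs x hxm
          have hx1 : x ≤ 1 := hxm.2
          have hx0 : 0 < x := hxm.1
          have hwa := abs_nonneg (w x); have haa := abs_nonneg (a x)
          have hca := abs_nonneg (c x)
          simp only [hVdef]
          have hFx : F * x ≤ C₁ := by nlinarith
          nlinarith [hsg, mul_le_mul_of_nonneg_right hFx hwa,
            mul_nonneg (sub_nonneg.2 hFC₁) (mul_nonneg hx0.le hca),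
            mul_nonneg hx0.le haa]
      rw [intervalIntegral.integral_const_mul] at hmono
      have : |w τ| ≤ |w 1| + |∫ s in τ..1, s * G s| := by
        calc |w τ| = |w 1 - (w 1 - w τ)| := by ring_nf
          _ ≤ |w 1| + |w 1 - w τ| := abs_sub _ _
          _ = |w 1| + |∫ s in τ..1, s * G s| := by rw [e]
      linarith
    -- (2) bound τ * |a τ|
    have h2 : τ * |a τ| ≤ |a 1| + ∫ s in τ..1, V s := by
      have e := haFTC τ hτ
      have habs : |∫ s in τ..1, deriv a s| ≤ ∫ s in τ..1, |deriv a s| :=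
        intervalIntegral.abs_integral_le_integral_abs hτ1
      have hmono : (∫ s in τ..1, τ * |deriv a s|) ≤ ∫ s in τ..1, V s := by
        apply intervalIntegral.integral_mono_on hτ1
        · exact (hCInt (fun s hs => continuousAt_const.mul (hdaC s hs).abs) hτ)
        · exact hVint
        · intro x hx
          have hxm := hsub hτ hx
          have hx0 : 0 < x := hxm.1
          have hww : τ * |deriv a x| ≤ |w x| := by
            have : |w x| = x * |deriv a x| := by
              simp only [hwdef]; rw [abs_mul, abs_of_pos hx0]
            rw [this]
            exact mul_le_mul_of_nonneg_right hx.1 (abs_nonneg _)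
          have haa := abs_nonneg (a x); have hca := abs_nonneg (c x)
          simp only [hVdef]
          nlinarith [mul_nonneg hx0.le haa, mul_nonneg hx0.le hca]
      rw [intervalIntegral.integral_const_mul] at hmono
      have htri : |a τ| ≤ |a 1| + |∫ s in τ..1, deriv a s| := by
        calc |a τ| = |a 1 - (a 1 - a τ)| := by ring_nf
          _ ≤ |a 1| + |a 1 - a τ| := abs_sub _ _
          _ = |a 1| + |∫ s in τ..1, deriv a s| := by rw [e]
      have ha1 := abs_nonneg (a 1)
      nlinarith [abs_nonneg (∫ s in τ..1, deriv a s),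
        mul_le_mul_of_nonneg_left habs hτ0.le,
        mul_le_mul_of_nonneg_left htri hτ0.le]
    -- (3) bound τ * |c τ|
    have h3 : τ * |c τ| ≤ |c 1| + 2 * ∫ s in τ..1, V s := by
      have e := hcFTC τ hτ
      have habs : |∫ s in τ..1, 2*s*a s| ≤ ∫ s in τ..1, |2*s*a s| :=
        intervalIntegral.abs_integral_le_integral_abs hτ1
      have hmono : (∫ s in τ..1, |2*s*a s|) ≤ ∫ s in τ..1, 2 * V s := by
        apply intervalIntegral.integral_mono_on hτ1
        · exact (hCInt (fun s hs =>
            ((continuousAt_const.mul continuousAt_id).mul (haC s hs)).abs) hτ)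
        · exact hVint.const_mul _
        · intro x hx
          have hxm := hsub hτ hx
          have hx0 : 0 < x := hxm.1
          have : |2*x*a x| = 2 * (x * |a x|) := by
            rw [abs_mul, abs_mul, abs_of_pos hx0]
            simp [abs_of_nonneg]; ring
          rw [this]
          have hwa := abs_nonneg (w x); have hca := abs_nonneg (c x)
          have haa := abs_nonneg (a x)
          simp only [hVdef]
          nlinarith [mul_nonneg hx0.le hca]
      rw [intervalIntegral.integral_const_mul] at hmono
      have htri : |c τ| ≤ |c 1| + |∫ s in τ..1, 2*s*a s| := by
        calc |c τ| = |c 1 - (c 1 - c τ)| := by ring_nf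
          _ ≤ |c 1| + |c 1 - c τ| := abs_sub _ _
          _ = |c 1| + |∫ s in τ..1, 2*s*a s| := by rw [e]
      have hc1 := abs_nonneg (c 1)
      nlinarith [abs_nonneg (∫ s in τ..1, 2*s*a s),
        mul_le_mul_of_nonneg_left habs hτ0.le,
        mul_le_mul_of_nonneg_left htri hτ0.le]
    have : V τ = |w τ| + τ * |a τ| + τ * |c τ| := rfl
    rw [this, hA0def, hB0def]
    linarith
  set M : ℝ := A0 * Real.exp B0 with hMdef
  have hVbd : ∀ τ ∈ Ioc (0:ℝ) 1, V τ ≤ M := gronwall_backward hA0 hB0 hVC hVineq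
  have hM : 0 ≤ M := by positivity
  -- refined bounds
  have hwbd : ∀ τ ∈ Ioc (0:ℝ) 1, |w τ| ≤ M := by
    intro τ hτ
    have hV := hVbd τ hτ
    have h1 := mul_nonneg hτ.1.le (abs_nonneg (a τ))
    have h2 := mul_nonneg hτ.1.le (abs_nonneg (c τ))
    simp only [hVdef] at hV
    linarith
  set M₂ : ℝ := |a 1| + M with hM₂def
  have hM₂ : 0 ≤ M₂ := by positivity
  have habd : ∀ τ ∈ Ioc (0:ℝ) 1, |a τ| ≤ M₂ * (1 - Real.log τ) := by
    intro τ hτ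
    have hτ0 := hτ.1; have hτ1 := hτ.2
    have e := haFTC τ hτ
    have hlog : Real.log τ ≤ 0 := Real.log_nonpos hτ0.le hτ1
    have habs : |∫ s in τ..1, deriv a s| ≤ ∫ s in τ..1, |deriv a s| :=
      intervalIntegral.abs_integral_le_integral_abs hτ1
    have hmono : (∫ s in τ..1, |deriv a s|) ≤ ∫ s in τ..1, M * s⁻¹ := by
      apply intervalIntegral.integral_mono_on hτ1
      · exact hCInt (fun s hs => (hdaC s hs).abs) hτ
      · apply ContinuousOn.intervalIntegrable
        rw [uIcc_of_le hτ1]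
        intro y hy
        exact (continuousAt_const.mul
          (continuousAt_inv₀ (ne_of_gt (lt_of_lt_of_le hτ0 hy.1)))).continuousWithinAt
      · intro x hx
        have hxm := hsub hτ hx
        have hx0 : 0 < x := hxm.1
        have hwx := hwbd x hxm
        have hde : |deriv a x| = |w x| * x⁻¹ := by
          simp only [hwdef]
          rw [abs_mul, abs_of_pos hx0]
          field_simp
        rw [hde]
        exact mul_le_mul_of_nonneg_right hwx (inv_nonneg.2 hx0.le)
    have hint : (∫ s in τ..1, M * s⁻¹) = M * (- Real.log τ) := by
      rw [intervalIntegral.integral_const_mul, integral_inv_of_pos hτ0 one_pos,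
        one_div, Real.log_inv]
    have htri : |a τ| ≤ |a 1| + |∫ s in τ..1, deriv a s| := by
      calc |a τ| = |a 1 - (a 1 - a τ)| := by ring_nf
        _ ≤ |a 1| + |a 1 - a τ| := abs_sub _ _
        _ = |a 1| + |∫ s in τ..1, deriv a s| := by rw [e]
    rw [hint] at hmono
    have := abs_nonneg (a 1)
    simp only [hM₂def]
    nlinarith [mul_nonneg (abs_nonneg (a 1)) (neg_nonneg.2 hlog)]
  set M₃ : ℝ := |c 1| + 3/2 * M₂ with hM₃def
  have hM₃ : 0 ≤ M₃ := by positivity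
  have hPhi1 : PhiAux 1 = 3/4 := by simp [PhiAux]
  have hcbd : ∀ τ ∈ Ioc (0:ℝ) 1, |c τ| ≤ M₃ := by
    intro τ hτ
    have hτ0 := hτ.1; have hτ1 := hτ.2
    have e := hcFTC τ hτ
    have habs : |∫ s in τ..1, 2*s*a s| ≤ ∫ s in τ..1, |2*s*a s| :=
      intervalIntegral.abs_integral_le_integral_abs hτ1
    have hφFTC : (∫ s in τ..1, phiAux s) = PhiAux 1 - PhiAux τ := by
      apply integral_eq_sub_of_hasDerivAt
      · intro x hx
        rw [uIcc_of_le hτ1] at hx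
        exact hasDerivAt_PhiAux (le_trans hτ0.le hx.1)
      · exact phiAux_cont.intervalIntegrable _ _
    have hmono : (∫ s in τ..1, |2*s*a s|) ≤ ∫ s in τ..1, 2*M₂ * phiAux s := by
      apply intervalIntegral.integral_mono_on hτ1
      · exact hCInt (fun s hs =>
          ((continuousAt_const.mul continuousAt_id).mul (haC s hs)).abs) hτ
      · exact (phiAux_cont.intervalIntegrable _ _).const_mul _
      · intro x hx
        have hxm := hsub hτ hx
        have hx0 : 0 < x := hxm.1
        have hax := habd x hxm
        have he2 : |2*x*a x| = 2 * (x * |a x|) := by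
          rw [abs_mul, abs_mul, abs_of_pos hx0]
          simp [abs_of_nonneg]
          ring
        rw [he2]
        have : x * |a x| ≤ x * (M₂ * (1 - Real.log x)) :=
          mul_le_mul_of_nonneg_left hax hx0.le
        have hφ : x * (M₂ * (1 - Real.log x)) = M₂ * phiAux x := by
          simp only [phiAux]; ring
        linarith
    rw [intervalIntegral.integral_const_mul, hφFTC, hPhi1] at hmono
    have hPnn := PhiAux_nonneg hτ0.le hτ1
    have htri : |c τ| ≤ |c 1| + |∫ s in τ..1, 2*s*a s| := by
      calc |c τ| = |c 1 - (c 1 - c τ)| := by ring_nf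
        _ ≤ |c 1| + |c 1 - c τ| := abs_sub _ _
        _ = |c 1| + |∫ s in τ..1, 2*s*a s| := by rw [e]
    simp only [hM₃def]
    nlinarith
  -- refined pointwise bound on |s * G s|
  set C₂ : ℝ := F*M + C₁*M₂ + F*M₃ with hC₂def
  have hC₂ : 0 ≤ C₂ := by
    have := mul_nonneg hF hM; have := mul_nonneg hC₁ hM₂; have := mul_nonneg hF hM₃
    simp only [hC₂def]; linarith
  have hGbd : ∀ s ∈ Ioc (0:ℝ) 1, |s * G s| ≤ C₂ * phiAux s := by
    intro s hs
    have hs0 := hs.1; have hs1 := hs.2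
    have hlog : Real.log s ≤ 0 := Real.log_nonpos hs0.le hs1
    have hsg := hsGabs s hs
    have h1 : s * |w s| ≤ M * s := by
      have := mul_le_mul_of_nonneg_left (hwbd s hs) hs0.le
      linarith [this]
    have h2 : s * |a s| ≤ M₂ * phiAux s := by
      have := mul_le_mul_of_nonneg_left (habd s hs) hs0.le
      have hφ : s * (M₂ * (1 - Real.log s)) = M₂ * phiAux s := by
        simp only [phiAux]; ring
      linarith
    have h3 : s * |c s| ≤ M₃ * s := by
      have := mul_le_mul_of_nonneg_left (hcbd s hs) hs0.le
      linarith
    have hsφ : s ≤ phiAux s := by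
      simp only [phiAux]
      nlinarith
    simp only [hC₂def]
    nlinarith [mul_le_mul_of_nonneg_left h1 hF, mul_le_mul_of_nonneg_left h2 hC₁,
      mul_le_mul_of_nonneg_left h3 hF,
      mul_le_mul_of_nonneg_left hsφ (mul_nonneg hF hM),
      mul_le_mul_of_nonneg_left hsφ (mul_nonneg hF hM₃)]
  -- the limit O of w at 0
  set O : ℝ := w 1 - ∫ s in Ioc (0:ℝ) 1, s * G s with hOdef
  have hsGC : ∀ s ∈ Ioc (0:ℝ) 1, ContinuousAt (fun s => s * G s) s := fun s hs =>
    continuousAt_id.mul (hGC s hs)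
  have hsGtail := tail_decomp hC₂ hsGC hGbd
  have hwO : ∀ τ ∈ Ioc (0:ℝ) 1, |w τ - O| ≤ C₂ * PhiAux τ := by
    intro τ hτ
    have e := hwFTC τ hτ
    have := hsGtail τ hτ
    have he : w τ - O = (∫ s in Ioc (0:ℝ) 1, s * G s) - ∫ s in τ..1, s * G s := by
      simp only [hOdef]
      linarith [e]
    rw [he]
    exact this
  -- the function r and the constant h
  set r : ℝ → ℝ := fun s => deriv a s - O * s⁻¹ with hrdef
  have hrC : ∀ s ∈ Ioc (0:ℝ) 1, ContinuousAt r s := fun s hs =>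
    (hdaC s hs).sub (continuousAt_const.mul (continuousAt_inv₀ (ne_of_gt hs.1)))
  have hrbd : ∀ s ∈ Ioc (0:ℝ) 1, |r s| ≤ C₂ * phiAux s := by
    intro s hs
    have hs0 := hs.1; have hs1 := hs.2
    have hne : s ≠ 0 := ne_of_gt hs0
    have he : r s = (w s - O) * s⁻¹ := by
      simp only [hrdef, hwdef]
      field_simp
    rw [he, abs_mul, abs_inv, abs_of_pos hs0]
    have h1 : |w s - O| * s⁻¹ ≤ (C₂ * PhiAux s) * s⁻¹ :=
      mul_le_mul_of_nonneg_right (hwO s hs) (inv_nonneg.2 hs0.le)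
    have h2 : PhiAux s ≤ s * phiAux s := PhiAux_le_mul hs0.le hs1
    have h3 : (C₂ * PhiAux s) * s⁻¹ ≤ (C₂ * (s * phiAux s)) * s⁻¹ := by
      apply mul_le_mul_of_nonneg_right _ (inv_nonneg.2 hs0.le)
      exact mul_le_mul_of_nonneg_left h2 hC₂
    have h4 : (C₂ * (s * phiAux s)) * s⁻¹ = C₂ * phiAux s := by
      rw [show (C₂ * (s * phiAux s)) * s⁻¹ = C₂ * phiAux s * (s * s⁻¹) from by ring,
        mul_inv_cancel₀ hne, mul_one]
    linarith
  have hrtail := tail_decomp hC₂ hrC hrbd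
  set h : ℝ := a 1 - ∫ s in Ioc (0:ℝ) 1, r s with hhdef
  have hrFTC : ∀ τ ∈ Ioc (0:ℝ) 1,
      ∫ s in τ..1, r s = (a 1 - O * Real.log 1) - (a τ - O * Real.log τ) := by
    intro τ hτ
    apply integral_eq_sub_of_hasDerivAt (f := fun s => a s - O * Real.log s)
    · intro x hx
      rw [uIcc_of_le hτ.2] at hx
      have hxm := hsub hτ hx
      exact ((hda x hxm).hasDerivAt).sub
        ((Real.hasDerivAt_log (ne_of_gt hxm.1)).const_mul O)
    · exact hCInt hrC hτ
  have hbound1 : ∀ τ ∈ Ioc (0:ℝ) 1, |a τ - O * Real.log τ - h| ≤ C₂ * PhiAux τ := by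
    intro τ hτ
    have e := hrFTC τ hτ
    rw [Real.log_one] at e
    have := hrtail τ hτ
    have he : a τ - O * Real.log τ - h
        = (∫ s in Ioc (0:ℝ) 1, r s) - ∫ s in τ..1, r s := by
      simp only [hhdef]
      linarith [e]
    rw [he]
    exact this
  -- the function p and the constant c₀
  set p : ℝ → ℝ := fun s => 2*s*a s with hpdef
  have hpC : ∀ s ∈ Ioc (0:ℝ) 1, ContinuousAt p s := fun s hs =>
    (continuousAt_const.mul continuousAt_id).mul (haC s hs)
  have hpbd : ∀ s ∈ Ioc (0:ℝ) 1, |p s| ≤ (2*M₂) * phiAux s := by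
    intro s hs
    have hs0 := hs.1
    have he2 : |p s| = 2 * (s * |a s|) := by
      simp only [hpdef]
      rw [abs_mul, abs_mul, abs_of_pos hs0]
      simp [abs_of_nonneg]
      ring
    rw [he2]
    have := mul_le_mul_of_nonneg_left (habd s hs) hs0.le
    have hφ : s * (M₂ * (1 - Real.log s)) = M₂ * phiAux s := by
      simp only [phiAux]; ring
    linarith
  have hptail := tail_decomp (by positivity) hpC hpbd
  set c₀ : ℝ := c 1 - ∫ s in Ioc (0:ℝ) 1, p s with hc₀def
  have hcbound : ∀ τ ∈ Ioc (0:ℝ) 1, |c τ - c₀| ≤ (2*M₂) * PhiAux τ := by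
    intro τ hτ
    have e := hcFTC τ hτ
    have := hptail τ hτ
    have he : c τ - c₀ = (∫ s in Ioc (0:ℝ) 1, p s) - ∫ s in τ..1, p s := by
      simp only [hc₀def, hpdef]
      linarith [e]
    rw [he]
    exact this
  -- conclusion
  refine ⟨c₀, ?_, O, h, 5/4 * C₂, by linarith, ?_⟩
  · -- Tendsto c (𝓝[>] 0) (𝓝 c₀)
    have hPhiC : Continuous PhiAux := by
      have : PhiAux = fun t : ℝ => 3/4*t^2 + t/2 * Real.negMulLog t := by
        funext t
        simp [PhiAux, Real.negMulLog]
        ring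
      rw [this]
      exact ((continuous_const.mul (continuous_pow 2)).add
        ((continuous_id.div_const 2).mul Real.continuous_negMulLog))
    have hPhi0 : Tendsto (fun τ => (2*M₂) * PhiAux τ) (nhdsWithin 0 (Ioi 0)) (nhds 0) := by
      have h1 : Tendsto PhiAux (nhdsWithin 0 (Ioi 0)) (nhds (PhiAux 0)) :=
        (hPhiC.tendsto 0).mono_left nhdsWithin_le_nhds
      have h2 : PhiAux 0 = 0 := by simp [PhiAux]
      rw [h2] at h1
      simpa using h1.const_mul (2*M₂)
    have hz : Tendsto (fun τ => c τ - c₀) (nhdsWithin 0 (Ioi 0)) (nhds 0) := by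
      apply squeeze_zero_norm' _ hPhi0
      filter_upwards [Ioc_mem_nhdsGT_of_mem (⟨le_refl 0, zero_lt_one⟩ : (0:ℝ) ∈ Ico 0 1)]
        with τ hτ
      simpa [Real.norm_eq_abs] using hcbound τ hτ
    have := hz.add (tendsto_const_nhds (x := c₀))
    simpa using this
  · intro τ hτ
    have hτ0 := hτ.1; have hτ1 := hτ.2
    have hPle := PhiAux_le hτ0.le hτ1
    constructor
    · have := hbound1 τ hτ
      have h2 : C₂ * PhiAux τ ≤ C₂ * (5/4 * (τ^2 * (1 + Real.log τ ^ 2))) :=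
        mul_le_mul_of_nonneg_left hPle hC₂
      calc |a τ - O * Real.log τ - h| ≤ C₂ * PhiAux τ := this
        _ ≤ C₂ * (5/4 * (τ^2 * (1 + Real.log τ ^ 2))) := h2
        _ = 5/4 * C₂ * τ^2 * (1 + Real.log τ ^ 2) := by ring
    · have hne : τ ≠ 0 := ne_of_gt hτ0
      have hde : deriv a τ - O / τ = (w τ - O) * τ⁻¹ := by
        simp only [hwdef]
        field_simp
      rw [hde, abs_mul, abs_inv, abs_of_pos hτ0]
      have h1 : |w τ - O| * τ⁻¹ ≤ (C₂ * PhiAux τ) * τ⁻¹ :=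
        mul_le_mul_of_nonneg_right (hwO τ hτ) (inv_nonneg.2 hτ0.le)
      have h2 : PhiAux τ ≤ 5/4 * (τ^2 * (1 + Real.log τ ^ 2)) := hPle
      have h3 : (C₂ * PhiAux τ) * τ⁻¹ ≤ (C₂ * (5/4 * (τ^2 * (1 + Real.log τ ^ 2)))) * τ⁻¹ := by
        apply mul_le_mul_of_nonneg_right _ (inv_nonneg.2 hτ0.le)
        exact mul_le_mul_of_nonneg_left h2 hC₂
      have hττ : τ^2 * τ⁻¹ = τ := by
        rw [sq, mul_assoc, mul_inv_cancel₀ hne, mul_one]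
      have h4 : (C₂ * (5/4 * (τ^2 * (1 + Real.log τ ^ 2)))) * τ⁻¹
          = 5/4 * C₂ * τ * (1 + Real.log τ ^ 2) := by
        rw [show (C₂ * (5/4 * (τ^2 * (1 + Real.log τ ^ 2)))) * τ⁻¹
          = 5/4 * C₂ * (τ^2 * τ⁻¹) * (1 + Real.log τ ^ 2) from by ring, hττ]
      linarith
end
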